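/- arXiv:2107.13690 — 7 statements merged into one kernel-verified Lean document; each statement's English description precedes it below -/
import Mathlib

section
/- In the setup (G centerless, f, h : G → Aut(G) with h(σ) = conj(g(σ))∘f(σ), g a bijection satisfying g(στ) = g(σ)·f(σ)(g(τ)), and N = {ρ(g(σ))∘f(σ) : σ ∈ G} a normal subgroup of Hol(G)), the commutator subgroup [G,G] is contained in ker(f)·ker(h), and the images f(G) and h(G) commute elementwise in Aut(G), i.e., f(σ)h(τ) = h(τ)f(σ) for all σ, τ ∈ G. -/
open scoped commutatorElement

/-- The left regular representation `λ : G →* Perm G`, `λ(σ)(x) = σ·x`. -/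
def lambda (G : Type*) [Group G] : G →* Equiv.Perm G where
  toFun σ := Equiv.mulLeft σ
  map_one' := by ext x; simp
  map_mul' σ τ := by ext x; simp [mul_assoc]

/-- The right regular representation `ρ : G →* Perm G`, `ρ(σ)(x) = x·σ⁻¹`. -/
def rho (G : Type*) [Group G] : G →* Equiv.Perm G where
  toFun σ := Equiv.mulRight σ⁻¹
  map_one' := by ext x; simp
  map_mul' σ τ := by ext x; simp [mul_assoc]

/-- The holomorph `Hol(G)`: the normalizer of `λ(G)` in `Perm G`. -/
def Hol (G : Type*) [Group G] : Subgroup (Equiv.Perm G) :=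
  Subgroup.normalizer ((lambda G).range : Set (Equiv.Perm G))

lemma nval (G : Type*) [Group G] (a x : G) (β : MulAut G) :
    (rho G a * MulAut.toPerm G β) x = β x * a⁻¹ := rfl

lemma conj_eval (G : Type*) [Group G] (α : MulAut G) (p : Equiv.Perm G) (x : G) :
    (MulAut.toPerm G α * p * (MulAut.toPerm G α)⁻¹) x = α (p (α⁻¹ x)) := rfl

lemma lam_eval (G : Type*) [Group G] (a x : G) : lambda G a x = a * x := rfl

lemma toPerm_mem_Hol (G : Type*) [Group G] (α : MulAut G) :
    MulAut.toPerm G α ∈ Hol G := by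
  rw [Hol, Subgroup.mem_normalizer_iff]
  intro p
  constructor
  · rintro ⟨τ, rfl⟩
    refine ⟨α τ, ?_⟩
    ext x
    rw [lam_eval, conj_eval, lam_eval, map_mul]
    simp
  · rintro ⟨τ, hτ⟩
    refine ⟨α⁻¹ τ, ?_⟩
    ext x
    have hx := DFunLike.congr_fun hτ (α x)
    rw [lam_eval, conj_eval] at hx
    have h1 : (α⁻¹ : MulAut G) (α x) = x := by simp
    rw [h1] at hx
    rw [lam_eval]
    have : (α⁻¹ : MulAut G) (τ * α x) = (α⁻¹ : MulAut G) (α (p x)) := by rw [hx]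
    rw [map_mul] at this
    simpa using this

lemma conj_of_apply (G : Type*) [Group G] (α : MulAut G) (a : G) :
    MulAut.conj (α a) = α * MulAut.conj a * α⁻¹ := by
  ext x
  show α a * x * (α a)⁻¹ = α (a * α⁻¹ x * a⁻¹)
  rw [map_mul, map_mul, map_inv]
  simp

/-- In the setup, the commutator subgroup `[G,G]` is contained in
`ker(f)·ker(h)` (which equals `ker f ⊔ ker h` since kernels are normal), and the
images `f(G)` and `h(G)` commute elementwise in `Aut(G)`. -/
theorem commutator_le_and_images_commute
    (G : Type*) [Group G] (hZ : Subgroup.center G = ⊥)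
    (f h : G →* MulAut G) (g : Equiv.Perm G) (hg1 : g 1 = 1)
    (hrel : ∀ σ τ : G, g (σ * τ) = g σ * (f σ) (g τ))
    (hh : ∀ σ : G, h σ = MulAut.conj (g σ) * f σ)
    (N : Subgroup (Equiv.Perm G))
    (hN : (N : Set (Equiv.Perm G))
      = {q | ∃ σ : G, q = rho G (g σ) * MulAut.toPerm G (f σ)})
    (hNle : N ≤ Hol G)
    (hNnorm : ∀ x ∈ Hol G, ∀ n ∈ N, x * n * x⁻¹ ∈ N)
    :
    commutator G ≤ f.ker ⊔ h.ker ∧ ∀ σ τ : G, f σ * h τ = h τ * f σ := by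
  have hq1 : g.symm 1 = 1 := by
    have := g.symm_apply_apply 1
    rw [hg1] at this
    exact this
  -- KEY: conjugation of N by any automorphism
  have key : ∀ (α : MulAut G) (σ : G),
      ∃ σ', g σ' = α (g σ) ∧ f σ' = α * f σ * α⁻¹ := by
    intro α σ
    have hmem : rho G (g σ) * MulAut.toPerm G (f σ) ∈ N := by
      have : (rho G (g σ) * MulAut.toPerm G (f σ)) ∈ (N : Set (Equiv.Perm G)) := by
        rw [hN]; exact ⟨σ, rfl⟩
      exact this
    have hconj : (MulAut.toPerm G α * (rho G (g σ) * MulAut.toPerm G (f σ)) *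
        (MulAut.toPerm G α)⁻¹) ∈ (N : Set (Equiv.Perm G)) :=
      hNnorm (MulAut.toPerm G α) (toPerm_mem_Hol G α) _ hmem
    rw [hN] at hconj
    obtain ⟨σ', heq⟩ := hconj
    have hpt : ∀ x : G, α ((f σ) (α⁻¹ x)) * (α (g σ))⁻¹ = (f σ') x * (g σ')⁻¹ := by
      intro x
      have := DFunLike.congr_fun heq x
      rw [conj_eval] at this
      rw [nval, nval] at this
      rw [map_mul, map_inv] at this
      exact this
    have hg' : g σ' = α (g σ) := by
      have h1 := hpt 1
      simp only [map_one, one_mul] at h1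
      exact (inv_injective h1).symm
    refine ⟨σ', hg', ?_⟩
    ext x
    have h2 := hpt (α x)
    have e2 : (α⁻¹ : MulAut G) (α x) = x := by simp
    rw [e2, ← hg'] at h2
    have h3 : α ((f σ) x) = (f σ') (α x) := mul_right_cancel h2
    show (f σ') x = α ((f σ) ((α⁻¹ : MulAut G) x))
    have h4 := hpt x
    rw [← hg'] at h4
    exact (mul_right_cancel h4).symm
  -- F(x) = f (g.symm x); conjugation relation for α = f σ
  have hFg : ∀ σ : G, f (g.symm (g σ)) = f σ := fun σ => by
    rw [Equiv.symm_apply_apply]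
  have hCf : ∀ x y : G,
      f (g.symm ((f (g.symm x)) y)) =
        f (g.symm x) * f (g.symm y) * (f (g.symm x))⁻¹ := by
    intro x y
    obtain ⟨σ', h1, h2⟩ := key (f (g.symm x)) (g.symm y)
    rw [Equiv.apply_symm_apply] at h1
    rw [← h1, Equiv.symm_apply_apply, h2]
  have hCh : ∀ x y : G,
      f (g.symm ((h (g.symm x)) y)) =
        h (g.symm x) * f (g.symm y) * (h (g.symm x))⁻¹ := by
    intro x y
    obtain ⟨σ', h1, h2⟩ := key (h (g.symm x)) (g.symm y)
    rw [Equiv.apply_symm_apply] at h1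
    rw [← h1, Equiv.symm_apply_apply, h2]
  -- F is an anti-homomorphism
  have hanti : ∀ x y : G, f (g.symm (x * y)) = f (g.symm y) * f (g.symm x) := by
    intro x y
    set σ := g.symm x with hσ
    set y₀ := ((f σ)⁻¹ : MulAut G) y with hy₀
    have hy : (f σ) y₀ = y := by rw [hy₀]; simp
    have h1 : x * y = g (σ * g.symm y₀) := by
      rw [hrel, Equiv.apply_symm_apply, Equiv.apply_symm_apply, hy]
    rw [h1, Equiv.symm_apply_apply, map_mul]
    have h2 := hCf x y₀
    rw [hy] at h2
    -- h2 : f (g.symm y) = f σ * f (g.symm y₀) * (f σ)⁻¹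
    rw [h2, ← hσ]
    group
  have hFinv : ∀ x : G, f (g.symm x⁻¹) = (f (g.symm x))⁻¹ := by
    intro x
    have h1 := hanti x x⁻¹
    rw [mul_inv_cancel, hq1, map_one] at h1
    exact (eq_inv_of_mul_eq_one_left h1.symm)
  -- commutation
  have hcomm : ∀ σ τ : G, f σ * h τ = h τ * f σ := by
    intro σ τ
    have hCh' := hCh (g τ) (g σ)
    rw [Equiv.symm_apply_apply, Equiv.symm_apply_apply] at hCh'
    -- hCh' : f (g.symm ((h τ) (g σ))) = h τ * f σ * (h τ)⁻¹
    have hτval : (h τ) (g σ) = g τ * ((f τ) (g σ) * (g τ)⁻¹) := by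
      rw [hh]
      show MulAut.conj (g τ) ((f τ) (g σ)) = _
      rw [MulAut.conj_apply, mul_assoc]
    have e1 : f (g.symm ((h τ) (g σ))) = f σ := by
      rw [hτval, hanti, hanti, hFinv]
      have h3 := hCf (g τ) (g σ)
      simp only [Equiv.symm_apply_apply] at h3 ⊢
      rw [h3]
      group
    rw [e1] at hCh'
    -- hCh' : f σ = h τ * f σ * (h τ)⁻¹
    conv_lhs => rw [hCh']
    group
  refine ⟨?_, hcomm⟩
  rw [commutator_def, Subgroup.commutator_le]
  intro σ _ τ _
  set w := (g τ)⁻¹ * (f σ) (g τ) with hw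
  set k := g.symm w with hk
  have hfk : f k = f σ * f τ * (f σ)⁻¹ * (f τ)⁻¹ := by
    rw [hk, hw, hanti, hFinv]
    have h3 := hCf (g σ) (g τ)
    simp only [Equiv.symm_apply_apply] at h3 ⊢
    rw [h3]
  have hhk : h k = 1 := by
    rw [hh, hfk]
    have hgk : g k = w := by rw [hk, Equiv.apply_symm_apply]
    rw [hgk, hw, map_mul, map_inv]
    have hconjf : MulAut.conj ((f σ) (g τ)) = f σ * MulAut.conj (g τ) * (f σ)⁻¹ :=
      conj_of_apply G (f σ) (g τ)
    have hconjτ : MulAut.conj (g τ) = h τ * (f τ)⁻¹ := by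
      rw [hh]; group
    rw [hconjf, hconjτ]
    -- now use commutation: f σ * (h τ * (f τ)⁻¹) * ... ; replace h τ * x interactions
    have c1 : f σ * h τ = h τ * f σ := hcomm σ τ
    have c2 : (f σ)⁻¹ * h τ = h τ * (f σ)⁻¹ := by
      have := hcomm σ τ
      calc (f σ)⁻¹ * h τ = (f σ)⁻¹ * (h τ * f σ) * (f σ)⁻¹ := by group
        _ = (f σ)⁻¹ * (f σ * h τ) * (f σ)⁻¹ := by rw [this]
        _ = h τ * (f σ)⁻¹ := by group
    calc (h τ * (f τ)⁻¹)⁻¹ * (f σ * (h τ * (f τ)⁻¹) * (f σ)⁻¹) *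
          (f σ * f τ * (f σ)⁻¹ * (f τ)⁻¹)
        = f τ * (h τ)⁻¹ * (f σ * h τ) * (f τ)⁻¹ * (f σ)⁻¹ *
          (f σ * f τ * (f σ)⁻¹ * (f τ)⁻¹) := by group
      _ = f τ * (h τ)⁻¹ * (h τ * f σ) * (f τ)⁻¹ * (f σ)⁻¹ *
          (f σ * f τ * (f σ)⁻¹ * (f τ)⁻¹) := by rw [c1]
      _ = 1 := by group
  -- now ⁅σ, τ⁆ = (⁅σ,τ⁆ * k⁻¹) * k
  have hsplit : ⁅σ, τ⁆ = (⁅σ, τ⁆ * k⁻¹) * k := by group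
  rw [hsplit]
  have mem1 : ⁅σ, τ⁆ * k⁻¹ ∈ f.ker := by
    rw [MonoidHom.mem_ker, map_mul, map_inv, commutatorElement_def]
    rw [map_mul, map_mul, map_mul, map_inv, map_inv, hfk]
    group
  have mem2 : k ∈ h.ker := by rw [MonoidHom.mem_ker]; exact hhk
  exact mul_mem (Subgroup.mem_sup_left mem1) (Subgroup.mem_sup_right mem2)
end

section
/- In the setup (G centerless, f, h : G → Aut(G) with h(σ) = conj(g(σ))∘f(σ), g a bijection satisfying g(στ) = g(σ)·f(σ)(g(τ)), and N = {ρ(g(σ))∘f(σ) : σ ∈ G} a normal subgroup of Hol(G)), the images f(G) and h(G) are centerless normal subgroups of Aut(G). -/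
section Aux

variable (G : Type*) [Group G]

lemma aux_lapp (a x : G) : lambda G a x = a * x := rfl

lemma aux_rapp (a x : G) : rho G a x = x * a⁻¹ := rfl

lemma aux_tpapp (ψ : MulAut G) (x : G) : MulAut.toPerm G ψ x = ψ x := rfl

lemma aux_napp (c : G) (ψ : MulAut G) (x : G) :
    (rho G c * MulAut.toPerm G ψ) x = ψ x * c⁻¹ := rfl

lemma aux_tpinv (ψ : MulAut G) (x : G) : (MulAut.toPerm G ψ)⁻¹ x = ψ⁻¹ x := rfl

lemma aux_uniq {c d : G} {ψ χ : MulAut G}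
    (hEq : rho G c * MulAut.toPerm G ψ = rho G d * MulAut.toPerm G χ) :
    c = d ∧ ψ = χ := by
  have h1 := congrArg (fun p : Equiv.Perm G => p 1) hEq
  simp only [aux_napp, map_one, one_mul] at h1
  have hc : c = d := inv_injective h1
  refine ⟨hc, ?_⟩
  ext x
  have h2 := congrArg (fun p : Equiv.Perm G => p x) hEq
  simp only [aux_napp] at h2
  rw [hc] at h2
  exact mul_right_cancel h2

lemma aux_lambda_decomp {z c : G} {ψ : MulAut G}
    (hEq : rho G c * MulAut.toPerm G ψ = lambda G z) :
    c = z⁻¹ ∧ ψ = MulAut.conj z := by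
  have h1 := congrArg (fun p : Equiv.Perm G => p 1) hEq
  simp only [aux_napp, aux_lapp, map_one, one_mul, mul_one] at h1
  have hc : c = z⁻¹ := inv_eq_iff_eq_inv.mp h1
  refine ⟨hc, ?_⟩
  ext x
  have h2 := congrArg (fun p : Equiv.Perm G => p x) hEq
  simp only [aux_napp, aux_lapp] at h2
  rw [hc, inv_inv] at h2
  rw [MulAut.conj_apply]
  exact eq_mul_inv_of_mul_eq h2

lemma aux_mulconj (φ : MulAut G) (t : G) :
    φ * MulAut.conj t = MulAut.conj (φ t) * φ := by
  ext x
  simp [MulAut.mul_apply, MulAut.conj_apply, map_mul, map_inv]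

lemma aux_lambda_mem_Hol (a : G) : lambda G a ∈ Hol G := by
  rw [Hol, Subgroup.mem_normalizer_iff]
  intro p
  constructor
  · rintro ⟨b, rfl⟩
    exact ⟨a * b * a⁻¹, by rw [map_mul, map_mul, map_inv]⟩
  · rintro ⟨b, hb⟩
    refine ⟨a⁻¹ * b * a, ?_⟩
    rw [map_mul, map_mul, map_inv, hb]
    group

lemma aux_toPerm_mem_Hol (φ : MulAut G) : MulAut.toPerm G φ ∈ Hol G := by
  have key : ∀ (χ : MulAut G) (b : G),
      MulAut.toPerm G χ * lambda G b * (MulAut.toPerm G χ)⁻¹ = lambda G (χ b) := by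
    intro χ b
    ext x
    simp [Equiv.Perm.mul_apply, aux_tpapp, aux_tpinv, aux_lapp, map_mul,
      MulAut.apply_inv_self]
  rw [Hol, Subgroup.mem_normalizer_iff]
  intro p
  constructor
  · rintro ⟨b, rfl⟩
    exact ⟨φ b, (key φ b).symm⟩
  · rintro ⟨b, hb⟩
    refine ⟨φ⁻¹ b, ?_⟩
    have h2 := key φ⁻¹ b
    rw [map_inv, inv_inv] at h2
    rw [← h2, hb]
    group

lemma aux_conj_aut (φ ψ : MulAut G) (c : G) :
    MulAut.toPerm G φ * (rho G c * MulAut.toPerm G ψ) * (MulAut.toPerm G φ)⁻¹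
      = rho G (φ c) * MulAut.toPerm G (φ * ψ * φ⁻¹) := by
  ext x
  simp [Equiv.Perm.mul_apply, aux_tpapp, aux_tpinv, aux_napp, aux_rapp, map_mul, map_inv, MulAut.mul_apply]

lemma aux_conj_lambda (c a : G) (ψ : MulAut G) :
    (rho G c * MulAut.toPerm G ψ) * lambda G a * (rho G c * MulAut.toPerm G ψ)⁻¹
      = lambda G (ψ a) := by
  have h1 : (rho G c * MulAut.toPerm G ψ) * lambda G a
      = lambda G (ψ a) * (rho G c * MulAut.toPerm G ψ) := by
    ext x
    simp [Equiv.Perm.mul_apply, aux_napp, aux_lapp, aux_rapp, aux_tpapp, map_mul, mul_assoc]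
  rw [h1, mul_assoc, mul_inv_cancel, mul_one]

lemma aux_conj_inj (hZ : Subgroup.center G = ⊥) {x y : G}
    (hxy : MulAut.conj x = MulAut.conj y) : x = y := by
  have hz : ∀ z : G, x * z * x⁻¹ = y * z * y⁻¹ := fun z => by
    have := congrArg (fun e : MulAut G => e z) hxy
    simpa [MulAut.conj_apply] using this
  have hw : y⁻¹ * x ∈ Subgroup.center G := by
    rw [Subgroup.mem_center_iff]
    intro z
    calc z * (y⁻¹ * x) = y⁻¹ * (y * z * y⁻¹) * x := by group
      _ = y⁻¹ * (x * z * x⁻¹) * x := by rw [hz z]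
      _ = (y⁻¹ * x) * z := by group
  rw [hZ, Subgroup.mem_bot] at hw
  exact (inv_mul_eq_one.mp hw).symm

end Aux
/-- In the setup, the images `f(G)` and `h(G)` are centerless normal
subgroups of `Aut(G)`. -/
theorem ranges_centerless_normal
    (G : Type*) [Group G] (hZ : Subgroup.center G = ⊥)
    (f h : G →* MulAut G) (g : Equiv.Perm G) (hg1 : g 1 = 1)
    (hrel : ∀ σ τ : G, g (σ * τ) = g σ * (f σ) (g τ))
    (hh : ∀ σ : G, h σ = MulAut.conj (g σ) * f σ)
    (N : Subgroup (Equiv.Perm G))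
    (hN : (N : Set (Equiv.Perm G))
      = {q | ∃ σ : G, q = rho G (g σ) * MulAut.toPerm G (f σ)})
    (hNle : N ≤ Hol G)
    (hNnorm : ∀ x ∈ Hol G, ∀ n ∈ N, x * n * x⁻¹ ∈ N)
    :
    f.range.Normal ∧ h.range.Normal ∧
      Subgroup.center ↥f.range = ⊥ ∧ Subgroup.center ↥h.range = ⊥ := by
  -- membership in N
  have hmemN : ∀ σ : G, rho G (g σ) * MulAut.toPerm G (f σ) ∈ N := by
    intro σ
    rw [← SetLike.mem_coe, hN]
    exact ⟨σ, rfl⟩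
  have hmemN' : ∀ q ∈ N, ∃ σ : G, q = rho G (g σ) * MulAut.toPerm G (f σ) := by
    intro q hq
    rwa [← SetLike.mem_coe, hN] at hq
  -- T1 : conjugation by an automorphism
  have hT1 : ∀ (φ : MulAut G) (τ : G), ∃ τ' : G,
      g τ' = φ (g τ) ∧ f τ' = φ * f τ * φ⁻¹ := by
    intro φ τ
    have hm := hNnorm _ (aux_toPerm_mem_Hol G φ) _ (hmemN τ)
    rw [aux_conj_aut] at hm
    obtain ⟨τ', hτ'⟩ := hmemN' _ hm
    obtain ⟨h1, h2⟩ := aux_uniq G hτ'.symm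
    exact ⟨τ', h1, h2⟩
  -- L2 : conjugation by left translations
  have hL2 : ∀ σ a : G, ∃ μ : G, g μ = a * (f σ a)⁻¹ ∧ h μ = 1 := by
    intro σ a
    have h2 : lambda G a * (rho G (g σ) * MulAut.toPerm G (f σ))⁻¹ * (lambda G a)⁻¹ ∈ N :=
      hNnorm _ (aux_lambda_mem_Hol G a) _ (N.inv_mem (hmemN σ))
    have h3 := N.mul_mem (hmemN σ) h2
    have h4 : (rho G (g σ) * MulAut.toPerm G (f σ)) *
        (lambda G a * (rho G (g σ) * MulAut.toPerm G (f σ))⁻¹ * (lambda G a)⁻¹)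
        = lambda G (f σ a * a⁻¹) := by
      have h5 := aux_conj_lambda G (g σ) a (f σ)
      calc (rho G (g σ) * MulAut.toPerm G (f σ)) *
            (lambda G a * (rho G (g σ) * MulAut.toPerm G (f σ))⁻¹ * (lambda G a)⁻¹)
          = ((rho G (g σ) * MulAut.toPerm G (f σ)) * lambda G a *
              (rho G (g σ) * MulAut.toPerm G (f σ))⁻¹) * (lambda G a)⁻¹ := by group
        _ = lambda G (f σ a) * (lambda G a)⁻¹ := by rw [h5]
        _ = lambda G (f σ a * a⁻¹) := by rw [map_mul, map_inv]
    rw [h4] at h3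
    obtain ⟨μ, hμ⟩ := hmemN' _ h3
    obtain ⟨hc, hψ⟩ := aux_lambda_decomp G hμ.symm
    refine ⟨μ, ?_, ?_⟩
    · rw [hc]
      simp [mul_inv_rev]
    · rw [hh, hc, hψ, ← map_mul, inv_mul_cancel, map_one]
  -- kernel facts
  have hkerf : ∀ μ : G, h μ = 1 → f μ = (MulAut.conj (g μ))⁻¹ := by
    intro μ h0
    have h1 : MulAut.conj (g μ) * f μ = 1 := by rw [← hh, h0]
    exact (inv_eq_of_mul_eq_one_right h1).symm
  have hginv : ∀ κ : G, h κ = 1 → g κ⁻¹ = (g κ)⁻¹ := by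
    intro κ h0
    have h1 := hrel κ κ⁻¹
    rw [mul_inv_cancel, hg1, hkerf κ h0, MulAut.conj_inv_apply] at h1
    -- h1 : 1 = g κ * ((g κ)⁻¹ * g κ⁻¹ * g κ)
    have h2 : g κ⁻¹ * g κ = 1 := by
      rw [h1]; group
    exact eq_inv_of_mul_eq_one_left h2
  -- key : elements (g τ)⁻¹ * f σ (g τ) come from ker h
  have hkey : ∀ σ τ : G, ∃ μ : G, g μ = (g τ)⁻¹ * f σ (g τ) ∧ h μ = 1 := by
    intro σ τ
    obtain ⟨σ', hgσ', hfσ'⟩ := hT1 (MulAut.conj (g τ))⁻¹ σ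
    obtain ⟨μ₁, hgμ₁, hhμ₁⟩ := hL2 σ' (g τ)
    refine ⟨μ₁⁻¹, ?_, by rw [map_inv, hhμ₁, inv_one]⟩
    rw [hginv μ₁ hhμ₁, hgμ₁, hfσ']
    simp only [MulAut.mul_apply, MulAut.conj_apply, MulAut.conj_inv_apply, inv_inv]
    group
  -- the commutation lemma : f(G) and h(G) centralize each other
  have hcomm : ∀ σ τ : G, f σ * h τ = h τ * f σ := by
    intro σ τ
    obtain ⟨μ, hgμ, hhμ⟩ := hkey σ τ
    have hfμ := hkerf μ hhμ
    obtain ⟨τ', hgτ', hfτ'⟩ := hT1 (f σ) τ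
    have hμτ : g (μ * τ) = f σ (g τ) := by
      rw [hrel, hfμ, MulAut.conj_inv_apply, hgμ]
      group
    have hττ : τ' = μ * τ := g.injective (by rw [hgτ', hμτ])
    have E1 : f μ * f τ = f σ * f τ * (f σ)⁻¹ := by
      rw [← map_mul, ← hττ, hfτ']
    have hc : MulAut.conj (f σ (g τ)) * f μ = MulAut.conj (g τ) := by
      rw [hfμ, hgμ, ← map_inv MulAut.conj, ← map_mul MulAut.conj]
      congr 1
      group
    rw [hh τ]
    calc f σ * (MulAut.conj (g τ) * f τ)
        = (f σ * MulAut.conj (g τ)) * f τ := by rw [mul_assoc]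
      _ = (MulAut.conj (f σ (g τ)) * f σ) * f τ := by rw [aux_mulconj]
      _ = MulAut.conj (f σ (g τ)) * (f σ * f τ * (f σ)⁻¹ * f σ) := by group
      _ = MulAut.conj (f σ (g τ)) * (f μ * f τ * f σ) := by rw [← E1]
      _ = (MulAut.conj (f σ (g τ)) * f μ) * (f τ * f σ) := by group
      _ = MulAut.conj (g τ) * (f τ * f σ) := by rw [hc]
      _ = MulAut.conj (g τ) * f τ * f σ := by rw [mul_assoc]
  -- main triviality lemma
  have hmain : ∀ θ : MulAut G, (∀ τ : G, θ * f τ = f τ * θ) →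
      (∀ τ : G, θ * h τ = h τ * θ) → θ = 1 := by
    intro θ hcf hch
    have hfix : ∀ x : G, θ x = x := by
      intro x
      have hx : g (g.symm x) = x := g.apply_symm_apply x
      set τ := g.symm x with hτdef
      have c1 : Commute θ (h τ) := hch τ
      have c2 : Commute θ (f τ) := hcf τ
      have c3 : θ * MulAut.conj (g τ) = MulAut.conj (g τ) * θ := by
        have e : MulAut.conj (g τ) = h τ * (f τ)⁻¹ := by
          rw [hh τ, mul_assoc, mul_inv_cancel, mul_one]
        rw [e, ← mul_assoc]
        exact (c1.mul_right c2.inv_right)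
      have e2 := aux_mulconj G θ (g τ)
      rw [c3] at e2
      have c4 : MulAut.conj (θ (g τ)) = MulAut.conj (g τ) := (mul_right_cancel e2).symm
      have c5 := aux_conj_inj G hZ c4
      rw [hx] at c5
      exact c5
    exact MulEquiv.ext hfix
  refine ⟨⟨?_⟩, ⟨?_⟩, ?_, ?_⟩
  · -- f.range normal
    intro x hx φ
    obtain ⟨τ, rfl⟩ := MonoidHom.mem_range.mp hx
    obtain ⟨τ', _, hfτ'⟩ := hT1 φ τ
    exact ⟨τ', hfτ'⟩
  · -- h.range normal
    intro x hx φ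
    obtain ⟨τ, rfl⟩ := MonoidHom.mem_range.mp hx
    obtain ⟨τ', hgτ', hfτ'⟩ := hT1 φ τ
    refine ⟨τ', ?_⟩
    rw [hh τ', hh τ, hgτ', hfτ']
    calc MulAut.conj (φ (g τ)) * (φ * f τ * φ⁻¹)
        = (MulAut.conj (φ (g τ)) * φ) * (f τ * φ⁻¹) := by group
      _ = (φ * MulAut.conj (g τ)) * (f τ * φ⁻¹) := by rw [← aux_mulconj]
      _ = φ * (MulAut.conj (g τ) * f τ) * φ⁻¹ := by group
  · -- center of f.range trivial
    rw [Subgroup.eq_bot_iff_forall]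
    rintro ⟨ψ, hmem⟩ hcent
    obtain ⟨σ₀, rfl⟩ := MonoidHom.mem_range.mp hmem
    have hcf : ∀ τ : G, f σ₀ * f τ = f τ * f σ₀ := by
      intro τ
      have h1 := Subgroup.mem_center_iff.mp hcent ⟨f τ, ⟨τ, rfl⟩⟩
      have h2 := congrArg Subtype.val h1
      simp only [MulMemClass.coe_mul] at h2
      exact h2.symm
    have hch : ∀ τ : G, f σ₀ * h τ = h τ * f σ₀ := fun τ => hcomm σ₀ τ
    have h0 := hmain (f σ₀) hcf hch
    exact Subtype.ext (by simpa using h0)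
  · -- center of h.range trivial
    rw [Subgroup.eq_bot_iff_forall]
    rintro ⟨ψ, hmem⟩ hcent
    obtain ⟨σ₀, rfl⟩ := MonoidHom.mem_range.mp hmem
    have hch : ∀ τ : G, h σ₀ * h τ = h τ * h σ₀ := by
      intro τ
      have h1 := Subgroup.mem_center_iff.mp hcent ⟨h τ, ⟨τ, rfl⟩⟩
      have h2 := congrArg Subtype.val h1
      simp only [MulMemClass.coe_mul] at h2
      exact h2.symm
    have hcf : ∀ τ : G, h σ₀ * f τ = f τ * h σ₀ := fun τ => (hcomm τ σ₀).symm
    have h0 := hmain (h σ₀) hcf hch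
    exact Subtype.ext (by simpa using h0)
end

section
/- In the setup (G centerless, f, h : G → Aut(G) with h(σ) = conj(g(σ))∘f(σ), g a bijection satisfying g(στ) = g(σ)·f(σ)(g(τ)), and N = {ρ(g(σ))∘f(σ) : σ ∈ G} a normal subgroup of Hol(G)), there are group isomorphisms G/ker(h) ≅ G/g(ker(h)), G/ker(f) ≅ G/g(ker(f)), and G/(ker(f)·ker(h)) ≅ G/(g(ker(f))·g(ker(h))). -/
theorem my_aux_normal {G₁ M : Type*} [Group G₁] [Group M] (φ : G₁ →* M) (A : Subgroup G₁)
    [hA : A.Normal] : ((Subgroup.map φ A).subgroupOf φ.range).Normal := by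
  constructor
  intro n hn p
  rw [Subgroup.mem_subgroupOf] at hn ⊢
  obtain ⟨a, ha, hae⟩ := hn
  obtain ⟨x, hx⟩ := p.2
  refine ⟨x * a * x⁻¹, hA.conj_mem a ha x, ?_⟩
  push_cast
  simp [map_mul, hx, hae]

theorem my_aux_ker {G₀ M : Type*} [Group G₀] [Group M] (χ : G₀ →* M) (C : Subgroup G₀)
    [C.Normal] [((Subgroup.map χ C).subgroupOf χ.range).Normal] :
    ((QuotientGroup.mk' ((Subgroup.map χ C).subgroupOf χ.range)).comp χ.rangeRestrict).ker
      = χ.ker ⊔ C := by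
  ext x
  rw [MonoidHom.mem_ker, MonoidHom.comp_apply, ← MonoidHom.mem_ker,
    QuotientGroup.ker_mk', Subgroup.mem_subgroupOf]
  have : ((χ.rangeRestrict x : χ.range) : M) = χ x := χ.coe_rangeRestrict x
  rw [this, ← Subgroup.mem_comap, Subgroup.comap_map_eq, sup_comm]

theorem my_aux {G₁ G₂ M : Type*} [Group G₁] [Group G₂] [Group M]
    (φ : G₁ →* M) (ψ : G₂ →* M) (A : Subgroup G₁) (B : Subgroup G₂)
    [A.Normal] [B.Normal] (h1 : φ.range = ψ.range)
    (h2 : Subgroup.map φ A = Subgroup.map ψ B) :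
    Nonempty ((G₁ ⧸ (φ.ker ⊔ A)) ≃* (G₂ ⧸ (ψ.ker ⊔ B))) := by
  haveI := my_aux_normal φ A
  haveI := my_aux_normal ψ B
  set J := (Subgroup.map φ A).subgroupOf φ.range with hJ
  set K := (Subgroup.map ψ B).subgroupOf ψ.range with hK
  have surj1 : Function.Surjective ((QuotientGroup.mk' J).comp φ.rangeRestrict) :=
    (QuotientGroup.mk'_surjective J).comp φ.rangeRestrict_surjective
  have surj2 : Function.Surjective ((QuotientGroup.mk' K).comp ψ.rangeRestrict) :=
    (QuotientGroup.mk'_surjective K).comp ψ.rangeRestrict_surjective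
  let e1 : G₁ ⧸ (φ.ker ⊔ A) ≃* φ.range ⧸ J :=
    (QuotientGroup.quotientMulEquivOfEq (my_aux_ker φ A).symm).trans
      (QuotientGroup.quotientKerEquivOfSurjective _ surj1)
  let e2 : G₂ ⧸ (ψ.ker ⊔ B) ≃* ψ.range ⧸ K :=
    (QuotientGroup.quotientMulEquivOfEq (my_aux_ker ψ B).symm).trans
      (QuotientGroup.quotientKerEquivOfSurjective _ surj2)
  have hm : Subgroup.map (MulEquiv.subgroupCongr h1).toMonoidHom J = K := by
    ext x
    simp only [Subgroup.mem_map, Subgroup.mem_subgroupOf, hJ, hK]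
    constructor
    · rintro ⟨y, hy, rfl⟩
      have hcoe : ((MulEquiv.subgroupCongr h1).toMonoidHom y : M) = (y : M) :=
        MulEquiv.subgroupCongr_apply h1 y
      have h3 : (y : M) ∈ Subgroup.map ψ B := by rw [← h2]; exact Subgroup.mem_map.mpr hy
      rw [hcoe]
      exact Subgroup.mem_map.mp h3
    · intro hx
      have hx' : (x : M) ∈ Subgroup.map φ A := by rw [h2]; exact Subgroup.mem_map.mpr hx
      refine ⟨⟨(x : M), Subgroup.map_le_range φ A hx'⟩, Subgroup.mem_map.mp hx', ?_⟩
      exact Subtype.ext (MulEquiv.subgroupCongr_apply h1 _)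
  exact ⟨e1.trans ((QuotientGroup.congr J K (MulEquiv.subgroupCongr h1) hm).trans e2.symm)⟩

/-- In the setup, with `Kf = g(ker f)` and `Kh = g(ker h)` (which are
normal, indeed characteristic, subgroups of `G`), there are group isomorphisms
`G/ker(h) ≅ G/g(ker h)`, `G/ker(f) ≅ G/g(ker f)`, and
`G/(ker(f)·ker(h)) ≅ G/(g(ker f)·g(ker h))`. -/
theorem quotients_isomorphic
    (G : Type*) [Group G] (hZ : Subgroup.center G = ⊥)
    (f h : G →* MulAut G) (g : Equiv.Perm G) (hg1 : g 1 = 1)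
    (hrel : ∀ σ τ : G, g (σ * τ) = g σ * (f σ) (g τ))
    (hh : ∀ σ : G, h σ = MulAut.conj (g σ) * f σ)
    (N : Subgroup (Equiv.Perm G))
    (hN : (N : Set (Equiv.Perm G))
      = {q | ∃ σ : G, q = rho G (g σ) * MulAut.toPerm G (f σ)})
    (hNle : N ≤ Hol G)
    (hNnorm : ∀ x ∈ Hol G, ∀ n ∈ N, x * n * x⁻¹ ∈ N)
    (Kf Kh : Subgroup G) [Kf.Normal] [Kh.Normal]
    (hKf : (Kf : Set G) = ⇑g '' (f.ker : Set G))
    (hKh : (Kh : Set G) = ⇑g '' (h.ker : Set G))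
    :
    Nonempty ((G ⧸ h.ker) ≃* (G ⧸ Kh)) ∧
      Nonempty ((G ⧸ f.ker) ≃* (G ⧸ Kf)) ∧
      Nonempty ((G ⧸ (f.ker ⊔ h.ker)) ≃* (G ⧸ (Kf ⊔ Kh))) := by
  have hgs1 : g.symm 1 = 1 := g.injective (by rw [g.apply_symm_apply, hg1])
  -- automorphisms lie in the holomorph
  have keyLam : ∀ (α : MulAut G) (a : G),
      MulAut.toPerm G α * lambda G a * (MulAut.toPerm G α)⁻¹ = lambda G (α a) := by
    intro α a
    ext x
    show α (a * α⁻¹ x) = α a * x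
    rw [map_mul, MulAut.apply_inv_self]
  have hAutHol : ∀ α : MulAut G, MulAut.toPerm G α ∈ Hol G := by
    intro α
    rw [Hol, Subgroup.mem_normalizer_iff]
    intro p
    constructor
    · rintro ⟨a, rfl⟩
      exact ⟨α a, (keyLam α a).symm⟩
    · rintro ⟨a, ha⟩
      refine ⟨α⁻¹ a, ?_⟩
      have h2 := keyLam α⁻¹ a
      rw [map_inv] at h2
      rw [← h2, ha]
      group
  -- the key consequence of normality of N
  have star : ∀ (α : MulAut G) (σ : G), ∃ τ : G, g τ = α (g σ) ∧ f τ = α * f σ * α⁻¹ := by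
    intro α σ
    have hn : rho G (g σ) * MulAut.toPerm G (f σ) ∈ N := by
      rw [← SetLike.mem_coe, hN]; exact ⟨σ, rfl⟩
    have h2 := hNnorm _ (hAutHol α) _ hn
    rw [← SetLike.mem_coe, hN] at h2
    obtain ⟨τ, hτ⟩ := h2
    have happ : ∀ x : G, α (f σ (α⁻¹ x) * (g σ)⁻¹) = f τ x * (g τ)⁻¹ := by
      intro x
      have h3 := congrArg (fun p : Equiv.Perm G => p x) hτ
      exact h3
    have hgτ : g τ = α (g σ) := by
      have h4 := happ 1
      simp only [map_one, one_mul, map_inv] at h4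
      exact (inv_injective h4).symm
    refine ⟨τ, hgτ, ?_⟩
    ext x
    have h5 := happ x
    rw [map_mul, map_inv, hgτ] at h5
    have h6 : α (f σ (α⁻¹ x)) = f τ x := mul_right_cancel h5
    show f τ x = α (f σ (α⁻¹ x))
    exact h6.symm
  -- equivariance of f ∘ g⁻¹ and h ∘ g⁻¹
  have eqf : ∀ (α : MulAut G) (x : G), f (g.symm (α x)) = α * f (g.symm x) * α⁻¹ := by
    intro α x
    obtain ⟨τ, h1t, h2t⟩ := star α (g.symm x)
    rw [g.apply_symm_apply] at h1t
    have hτ : g.symm (α x) = τ := by rw [← h1t, Equiv.symm_apply_apply]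
    rw [hτ, h2t]
  have conjA : ∀ (α : MulAut G) (x : G), MulAut.conj (α x) = α * MulAut.conj x * α⁻¹ := by
    intro α x
    ext y
    simp [MulAut.conj_apply, MulAut.mul_apply, map_mul, map_inv]
  have eqh : ∀ (α : MulAut G) (x : G), h (g.symm (α x)) = α * h (g.symm x) * α⁻¹ := by
    intro α x
    obtain ⟨τ, h1t, h2t⟩ := star α (g.symm x)
    rw [g.apply_symm_apply] at h1t
    have hτ : g.symm (α x) = τ := by rw [← h1t, Equiv.symm_apply_apply]
    rw [hτ, hh τ, h1t, h2t, conjA α x, hh (g.symm x), g.apply_symm_apply]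
    group
  -- multiplicativity relations for g.symm
  have gsm : ∀ x y : G, g.symm (x * y) = g.symm x * g.symm ((f (g.symm x))⁻¹ y) := by
    intro x y
    apply g.injective
    rw [g.apply_symm_apply, hrel, g.apply_symm_apply, g.apply_symm_apply, MulAut.apply_inv_self]
  have gsm2 : ∀ x y : G,
      g.symm ((x * y)⁻¹) = g.symm x⁻¹ * g.symm (((h (g.symm x⁻¹))⁻¹ y)⁻¹) := by
    intro x y
    apply g.injective
    rw [g.apply_symm_apply, hrel, g.apply_symm_apply, g.apply_symm_apply]
    have hfσ : f (g.symm x⁻¹) = (MulAut.conj x⁻¹)⁻¹ * h (g.symm x⁻¹) := by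
      rw [hh (g.symm x⁻¹), g.apply_symm_apply]; group
    rw [hfσ, MulAut.mul_apply, ← map_inv ((h (g.symm x⁻¹))⁻¹) y, MulAut.apply_inv_self,
      map_inv MulAut.conj x, inv_inv, MulAut.conj_apply]
    simp [mul_assoc]
  -- the twisted homomorphisms F and H
  let F : G →* MulAut G := MonoidHom.mk' (fun x => (f (g.symm x))⁻¹) (by
    intro x y
    show (f (g.symm (x * y)))⁻¹ = (f (g.symm x))⁻¹ * (f (g.symm y))⁻¹
    rw [gsm x y, map_mul, eqf (f (g.symm x))⁻¹ y]
    group)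
  let H : G →* MulAut G := MonoidHom.mk' (fun x => (h (g.symm x⁻¹))⁻¹) (by
    intro x y
    have hinv : ((h (g.symm x⁻¹))⁻¹ y)⁻¹ = (h (g.symm x⁻¹))⁻¹ y⁻¹ := (map_inv _ y).symm
    show (h (g.symm (x * y)⁻¹))⁻¹ = (h (g.symm x⁻¹))⁻¹ * (h (g.symm y⁻¹))⁻¹
    rw [gsm2 x y, map_mul, hinv, eqh (h (g.symm x⁻¹))⁻¹ y⁻¹]
    group)
  -- kernels
  have memKf : ∀ x : G, x ∈ Kf ↔ g.symm x ∈ f.ker := by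
    intro x
    rw [← SetLike.mem_coe, hKf]
    constructor
    · rintro ⟨σ, hσ, rfl⟩; rwa [Equiv.symm_apply_apply]
    · intro hx; exact ⟨g.symm x, hx, g.apply_symm_apply x⟩
  have memKh : ∀ x : G, x ∈ Kh ↔ g.symm x ∈ h.ker := by
    intro x
    rw [← SetLike.mem_coe, hKh]
    constructor
    · rintro ⟨σ, hσ, rfl⟩; rwa [Equiv.symm_apply_apply]
    · intro hx; exact ⟨g.symm x, hx, g.apply_symm_apply x⟩
  have kerF : F.ker = Kf := by
    ext x
    rw [MonoidHom.mem_ker]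
    show (f (g.symm x))⁻¹ = 1 ↔ x ∈ Kf
    rw [inv_eq_one, ← MonoidHom.mem_ker, ← memKf]
  have kerH : H.ker = Kh := by
    ext x
    rw [MonoidHom.mem_ker]
    show (h (g.symm x⁻¹))⁻¹ = 1 ↔ x ∈ Kh
    rw [inv_eq_one, ← MonoidHom.mem_ker, ← memKh, inv_mem_iff]
  -- ranges
  have rangeF : F.range = f.range := by
    ext β
    simp only [MonoidHom.mem_range]
    constructor
    · rintro ⟨x, rfl⟩
      exact ⟨(g.symm x)⁻¹, by rw [map_inv]; rfl⟩
    · rintro ⟨σ, rfl⟩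
      refine ⟨g σ⁻¹, ?_⟩
      show (f (g.symm (g σ⁻¹)))⁻¹ = f σ
      rw [Equiv.symm_apply_apply, map_inv, inv_inv]
  have rangeH : H.range = h.range := by
    ext β
    simp only [MonoidHom.mem_range]
    constructor
    · rintro ⟨x, rfl⟩
      exact ⟨(g.symm x⁻¹)⁻¹, by rw [map_inv]; rfl⟩
    · rintro ⟨σ, rfl⟩
      refine ⟨(g σ⁻¹)⁻¹, ?_⟩
      show (h (g.symm ((g σ⁻¹)⁻¹)⁻¹))⁻¹ = h σ
      rw [inv_inv, Equiv.symm_apply_apply, map_inv, inv_inv]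
  -- image subgroups
  have mapfh : Subgroup.map f h.ker = Subgroup.map F Kh := by
    ext β
    simp only [Subgroup.mem_map]
    constructor
    · rintro ⟨τ, hτ, rfl⟩
      refine ⟨g τ⁻¹, ?_, ?_⟩
      · rw [memKh, Equiv.symm_apply_apply]; exact inv_mem hτ
      · show (f (g.symm (g τ⁻¹)))⁻¹ = f τ
        rw [Equiv.symm_apply_apply, map_inv, inv_inv]
    · rintro ⟨x, hx, rfl⟩
      refine ⟨(g.symm x)⁻¹, inv_mem ((memKh x).mp hx), ?_⟩
      show f ((g.symm x)⁻¹) = F x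
      rw [map_inv]; rfl
  refine ⟨?_, ?_, ?_⟩
  · have hmb : Subgroup.map h (⊥ : Subgroup G) = Subgroup.map H ⊥ := by
      rw [Subgroup.map_bot, Subgroup.map_bot]
    obtain ⟨e⟩ := my_aux h H ⊥ ⊥ rangeH.symm hmb
    exact ⟨((QuotientGroup.quotientMulEquivOfEq (sup_bot_eq h.ker).symm).trans e).trans
      (QuotientGroup.quotientMulEquivOfEq (by rw [sup_bot_eq, kerH]))⟩
  · have hmb : Subgroup.map f (⊥ : Subgroup G) = Subgroup.map F ⊥ := by
      rw [Subgroup.map_bot, Subgroup.map_bot]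
    obtain ⟨e⟩ := my_aux f F ⊥ ⊥ rangeF.symm hmb
    exact ⟨((QuotientGroup.quotientMulEquivOfEq (sup_bot_eq f.ker).symm).trans e).trans
      (QuotientGroup.quotientMulEquivOfEq (by rw [sup_bot_eq, kerF]))⟩
  · obtain ⟨e⟩ := my_aux f F h.ker Kh rangeF.symm mapfh
    exact ⟨e.trans (QuotientGroup.quotientMulEquivOfEq (by rw [kerF]))⟩
end

section
/- In the setup (G centerless, f, h : G → Aut(G) with h(σ) = conj(g(σ))∘f(σ), g a bijection satisfying g(στ) = g(σ)·f(σ)(g(τ)), and N = {ρ(g(σ))∘f(σ) : σ ∈ G} a normal subgroup of Hol(G)), suppose moreover that π ∈ Perm(G) satisfies N = πλ(G)π⁻¹ and that the normalizer of N in Perm(G) equals Hol(G). Then π² ∈ Hol(G) if and only if both of the following hold: (a) g(στ) ≡ g(τ)g(σ) (mod ker(f)) for all σ, τ ∈ G (g induces an anti-homomorphism from G to G/ker(f)); and (b) g(στ) ≡ g(σ)g(τ) (mod ker(h)) for all σ, τ ∈ G (g induces a homomorphism from G to G/ker(h)). -/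
lemma mem_conjMap {M : Type*} [Group M] (p x : M) (H : Subgroup M) :
    x ∈ Subgroup.map (MulAut.conj p).toMonoidHom H ↔ p⁻¹ * x * p ∈ H := by
  rw [Subgroup.mem_map]
  constructor
  · rintro ⟨y, hy, rfl⟩
    simpa [MulAut.conj_apply, mul_assoc] using hy
  · intro hx
    exact ⟨p⁻¹ * x * p, hx, by simp [MulAut.conj_apply, mul_assoc]⟩

/-- In the setup, if moreover `π ∈ Perm(G)` satisfies `N = πλ(G)π⁻¹`
and the normalizer of `N` in `Perm(G)` is `Hol(G)`, then `π² ∈ Hol(G)` if and only if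
(a) `g(στ) ≡ g(τ)g(σ) (mod ker f)` for all `σ, τ` and
(b) `g(στ) ≡ g(σ)g(τ) (mod ker h)` for all `σ, τ`. -/
theorem pi_sq_mem_Hol_iff
    (G : Type*) [Group G] (hZ : Subgroup.center G = ⊥)
    (f h : G →* MulAut G) (g : Equiv.Perm G) (hg1 : g 1 = 1)
    (hrel : ∀ σ τ : G, g (σ * τ) = g σ * (f σ) (g τ))
    (hh : ∀ σ : G, h σ = MulAut.conj (g σ) * f σ)
    (N : Subgroup (Equiv.Perm G))
    (hN : (N : Set (Equiv.Perm G))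
      = {q | ∃ σ : G, q = rho G (g σ) * MulAut.toPerm G (f σ)})
    (hNle : N ≤ Hol G)
    (hNnorm : ∀ x ∈ Hol G, ∀ n ∈ N, x * n * x⁻¹ ∈ N)
    (pi : Equiv.Perm G)
    (hpiN : N = Subgroup.map (MulAut.conj pi).toMonoidHom (lambda G).range)
    (hNnormalizer : Subgroup.normalizer (N : Set (Equiv.Perm G)) = Hol G)
    :
    pi ^ 2 ∈ Hol G ↔
      ((∀ σ τ : G, (g (σ * τ))⁻¹ * (g τ * g σ) ∈ f.ker) ∧
        (∀ σ τ : G, (g (σ * τ))⁻¹ * (g σ * g τ) ∈ h.ker)) := by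
  classical
  have hHol : Hol G = Subgroup.normalizer ((lambda G).range : Set (Equiv.Perm G)) := rfl
  have hmemN : ∀ q : Equiv.Perm G,
      q ∈ N ↔ ∃ σ : G, q = rho G (g σ) * MulAut.toPerm G (f σ) := by
    intro q
    rw [← SetLike.mem_coe, hN]
    rfl
  have hgsymm1 : g.symm 1 = 1 := by
    conv_lhs => rw [← hg1]
    exact g.symm_apply_apply 1
  -- inversion identity
  have hinv : ∀ σ : G, f σ (g σ⁻¹) = (g σ)⁻¹ := by
    intro σ
    have hthis := hrel σ σ⁻¹
    rw [mul_inv_cancel, hg1] at hthis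
    exact (eq_inv_of_mul_eq_one_right hthis.symm)
  -- conjugation of λ by an automorphism
  have hconj_lam : ∀ (α : MulAut G) (τ : G),
      MulAut.toPerm G α * lambda G τ * (MulAut.toPerm G α)⁻¹ = lambda G (α τ) := by
    intro α τ
    ext x
    show α (τ * α⁻¹ x) = α τ * x
    rw [map_mul, MulAut.apply_inv_self]
  -- automorphisms lie in the holomorph
  have hAutHol : ∀ α : MulAut G, MulAut.toPerm G α ∈ Hol G := by
    intro α
    rw [hHol, Subgroup.mem_normalizer_iff]
    intro q
    simp only [MonoidHom.mem_range]
    constructor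
    · rintro ⟨τ, rfl⟩
      exact ⟨α τ, (hconj_lam α τ).symm⟩
    · rintro ⟨τ, hτ⟩
      refine ⟨α⁻¹ τ, ?_⟩
      have h2 := hconj_lam α⁻¹ τ
      rw [map_inv] at h2
      rw [hτ] at h2
      rw [← h2]
      group
  -- extraction of components
  have hextract : ∀ {u v : G} {β δ : MulAut G},
      rho G u * MulAut.toPerm G β = rho G v * MulAut.toPerm G δ → u = v ∧ β = δ := by
    intro u v β δ H
    have h1 := DFunLike.congr_fun H 1
    change β 1 * u⁻¹ = δ 1 * v⁻¹ at h1
    rw [map_one, map_one, one_mul, one_mul] at h1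
    have huv : u = v := inv_injective h1
    refine ⟨huv, MulEquiv.ext fun x => ?_⟩
    have h2 := DFunLike.congr_fun H x
    change β x * u⁻¹ = δ x * v⁻¹ at h2
    rw [huv] at h2
    exact mul_right_cancel h2
  -- conjugation of ι σ by an automorphism
  have hconj_iota : ∀ (α : MulAut G) (σ : G),
      MulAut.toPerm G α * (rho G (g σ) * MulAut.toPerm G (f σ)) * (MulAut.toPerm G α)⁻¹
        = rho G (α (g σ)) * MulAut.toPerm G (α * f σ * α⁻¹) := by
    intro α σ
    ext x
    show α (f σ (α⁻¹ x) * (g σ)⁻¹) = α (f σ (α⁻¹ x)) * (α (g σ))⁻¹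
    rw [map_mul, map_inv]
  -- N1 : the key normality consequence
  have hN1 : ∀ (α : MulAut G) (σ : G), f (g.symm (α (g σ))) = α * f σ * α⁻¹ := by
    intro α σ
    have hmem : MulAut.toPerm G α * (rho G (g σ) * MulAut.toPerm G (f σ))
        * (MulAut.toPerm G α)⁻¹ ∈ N :=
      hNnorm _ (hAutHol α) _ ((hmemN _).2 ⟨σ, rfl⟩)
    rw [hconj_iota] at hmem
    obtain ⟨τ, hτ⟩ := (hmemN _).1 hmem
    obtain ⟨h1, h2⟩ := hextract hτ
    rw [h1, Equiv.symm_apply_apply]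
    exact h2.symm
  -- commutation of the images of f and h
  have hcomm : ∀ y z : G, h z * f y * (h z)⁻¹ = f y := by
    intro y z
    have key : g (z * (y * g.symm ((f y)⁻¹ (g z⁻¹)))) = (h z) (g y) := by
      rw [hrel, hrel, Equiv.apply_symm_apply, MulAut.apply_inv_self, map_mul, hinv, hh]
      simp only [MulAut.mul_apply, MulAut.conj_apply]
      group
    have e2 : g.symm ((h z) (g y)) = z * (y * g.symm ((f y)⁻¹ (g z⁻¹))) := by
      rw [← key, Equiv.symm_apply_apply]
    have e1 := hN1 (h z) y
    rw [e2, f.map_mul, f.map_mul] at e1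
    have e3 : f (g.symm ((f y)⁻¹ (g z⁻¹))) = (f y)⁻¹ * f z⁻¹ * ((f y)⁻¹)⁻¹ :=
      hN1 (f y)⁻¹ z⁻¹
    rw [e3, f.map_inv] at e1
    rw [← e1]
    group
  have hcomm' : ∀ y z : G, f y * h z = h z * f y := by
    intro y z
    conv_lhs => rw [← hcomm y z]
    group
  -- the t-element facts
  have hgQ : ∀ σ y : G, g (y * g.symm ((f y)⁻¹ (g ((g σ)⁻¹)))) = g y * g ((g σ)⁻¹) := by
    intro σ y
    rw [hrel, Equiv.apply_symm_apply, MulAut.apply_inv_self]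
  have hft : ∀ σ y : G,
      f (g.symm ((f y)⁻¹ (g ((g σ)⁻¹)))) = (f y)⁻¹ * f ((g σ)⁻¹) * f y := by
    intro σ y
    have hthis := hN1 (f y)⁻¹ ((g σ)⁻¹)
    rw [inv_inv] at hthis
    exact hthis
  have hconjcomm : ∀ (β : MulAut G) (w : G),
      MulAut.conj (β w) = β * MulAut.conj w * β⁻¹ := by
    intro β w
    refine MulEquiv.ext fun x => ?_
    simp only [MulAut.mul_apply, MulAut.conj_apply, map_mul, map_inv,
      MulAut.apply_inv_self]
  have hht : ∀ σ y : G, h (g.symm ((f y)⁻¹ (g ((g σ)⁻¹)))) = h ((g σ)⁻¹) := by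
    intro σ y
    have hts : h (g.symm ((f y)⁻¹ (g ((g σ)⁻¹)))) = (f y)⁻¹ * h ((g σ)⁻¹) * f y := by
      rw [hh, hh ((g σ)⁻¹), Equiv.apply_symm_apply, hconjcomm, hft σ y, inv_inv]
      group
    rw [hts, mul_assoc, ← hcomm' y ((g σ)⁻¹), inv_mul_cancel_left]
  -- pointwise kernel reformulations
  have hkerf : ∀ σ τ : G, ((g (σ * τ))⁻¹ * (g τ * g σ) ∈ f.ker) ↔
      f (g (σ * τ)) = f (g τ) * f (g σ) := by
    intro σ τ
    rw [MonoidHom.mem_ker]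
    have e : f ((g (σ * τ))⁻¹ * (g τ * g σ))
        = (f (g (σ * τ)))⁻¹ * (f (g τ) * f (g σ)) := by
      rw [f.map_mul, f.map_mul, f.map_inv]
    rw [e, inv_mul_eq_one]
  have hkerh : ∀ σ τ : G, ((g (σ * τ))⁻¹ * (g σ * g τ) ∈ h.ker) ↔
      h (g (σ * τ)) = h (g σ) * h (g τ) := by
    intro σ τ
    rw [MonoidHom.mem_ker]
    have e : h ((g (σ * τ))⁻¹ * (g σ * g τ))
        = (h (g (σ * τ)))⁻¹ * (h (g σ) * h (g τ)) := by
      rw [h.map_mul, h.map_mul, h.map_inv]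
    rw [e, inv_mul_eq_one]
  -- (a) ⟺ C1
  have haC1 : (∀ σ τ : G, f (g (σ * τ)) = f (g τ) * f (g σ)) ↔
      (∀ σ y : G, f (f σ y) = (f (g σ))⁻¹ * f y * f (g σ)) := by
    constructor
    · intro ha σ y
      have h1 := ha σ (g.symm y)
      rw [hrel σ (g.symm y), Equiv.apply_symm_apply, f.map_mul] at h1
      calc f (f σ y) = (f (g σ))⁻¹ * (f (g σ) * f (f σ y)) := by group
        _ = (f (g σ))⁻¹ * (f y * f (g σ)) := by rw [h1]
        _ = (f (g σ))⁻¹ * f y * f (g σ) := by group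
    · intro hc σ τ
      rw [hrel, f.map_mul, hc σ (g τ)]
      group
  -- (b) ⟺ C2'
  have hbC2 : (∀ σ τ : G, h (g (σ * τ)) = h (g σ) * h (g τ)) ↔
      (∀ σ y : G, h (f σ y) = h y) := by
    constructor
    · intro hb σ y
      have h1 := hb σ (g.symm y)
      rw [hrel σ (g.symm y), Equiv.apply_symm_apply, h.map_mul] at h1
      exact mul_left_cancel h1
    · intro hc σ τ
      rw [hrel, h.map_mul, hc σ (g τ)]
  -- star ⟺ (C1 ∧ C2')
  have hstar_iff : (∀ σ y : G, g (f σ y * (g σ)⁻¹) = g y * g ((g σ)⁻¹)) ↔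
      ((∀ σ y : G, f (f σ y) = (f (g σ))⁻¹ * f y * f (g σ)) ∧
       (∀ σ y : G, h (f σ y) = h y)) := by
    constructor
    · intro hs
      have hPQ : ∀ σ y : G,
          f σ y * (g σ)⁻¹ = y * g.symm ((f y)⁻¹ (g ((g σ)⁻¹))) := by
        intro σ y
        apply g.injective
        rw [hgQ σ y]
        exact hs σ y
      constructor
      · intro σ y
        have h1 := congrArg f (hPQ σ y)
        rw [f.map_mul, f.map_mul, f.map_inv, hft σ y, f.map_inv] at h1
        calc f (f σ y) = (f (f σ y) * (f (g σ))⁻¹) * f (g σ) := by group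
          _ = (f y * ((f y)⁻¹ * (f (g σ))⁻¹ * f y)) * f (g σ) := by rw [h1]
          _ = (f (g σ))⁻¹ * f y * f (g σ) := by group
      · intro σ y
        have h1 := congrArg h (hPQ σ y)
        rw [h.map_mul, h.map_mul, hht σ y] at h1
        exact mul_right_cancel h1
    · rintro ⟨c1, c2⟩ σ y
      have hf' : f (f σ y * (g σ)⁻¹) = f (y * g.symm ((f y)⁻¹ (g ((g σ)⁻¹)))) := by
        rw [f.map_mul, f.map_mul, hft σ y, c1 σ y]
        simp only [map_inv]
        group
      have hh' : h (f σ y * (g σ)⁻¹) = h (y * g.symm ((f y)⁻¹ (g ((g σ)⁻¹)))) := by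
        rw [h.map_mul, h.map_mul, hht σ y, c2 σ y]
      have hfμ : f ((f σ y * (g σ)⁻¹)⁻¹ * (y * g.symm ((f y)⁻¹ (g ((g σ)⁻¹))))) = 1 := by
        rw [f.map_mul, f.map_inv, hf', inv_mul_cancel]
      have hhμ : h ((f σ y * (g σ)⁻¹)⁻¹ * (y * g.symm ((f y)⁻¹ (g ((g σ)⁻¹))))) = 1 := by
        rw [h.map_mul, h.map_inv, hh', inv_mul_cancel]
      have hcj := hh ((f σ y * (g σ)⁻¹)⁻¹ * (y * g.symm ((f y)⁻¹ (g ((g σ)⁻¹)))))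
      rw [hhμ, hfμ, mul_one] at hcj
      have hconj1 : MulAut.conj
          (g ((f σ y * (g σ)⁻¹)⁻¹ * (y * g.symm ((f y)⁻¹ (g ((g σ)⁻¹)))))) = 1 :=
        hcj.symm
      have hcent : g ((f σ y * (g σ)⁻¹)⁻¹ * (y * g.symm ((f y)⁻¹ (g ((g σ)⁻¹)))))
          ∈ Subgroup.center G := by
        rw [Subgroup.mem_center_iff]
        intro x
        have hx := congrArg (fun e : MulAut G => e x) hconj1
        simp only [MulAut.conj_apply, MulAut.one_apply] at hx
        conv_lhs => rw [← hx]
        group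
      rw [hZ, Subgroup.mem_bot] at hcent
      have hμ1 : (f σ y * (g σ)⁻¹)⁻¹ * (y * g.symm ((f y)⁻¹ (g ((g σ)⁻¹)))) = 1 :=
        g.injective (by rw [hcent, hg1])
      have hPQ : f σ y * (g σ)⁻¹ = y * g.symm ((f y)⁻¹ (g ((g σ)⁻¹))) :=
        inv_mul_eq_one.mp hμ1
      rw [← hgQ σ y]
      exact congrArg g hPQ
  -- the permutation p0
  set p0 : Equiv.Perm G := g.trans (Equiv.inv G) with hp0
  have hp0conj : ∀ σ : G,
      p0 * lambda G σ * p0⁻¹ = rho G (g σ) * MulAut.toPerm G (f σ) := by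
    intro σ
    ext x
    show (g (σ * g.symm x⁻¹))⁻¹ = f σ x * (g σ)⁻¹
    rw [hrel, Equiv.apply_symm_apply, map_inv, mul_inv_rev, inv_inv]
  have memN_pi : ∀ x : Equiv.Perm G, x ∈ N ↔ pi⁻¹ * x * pi ∈ (lambda G).range := by
    intro x
    conv_lhs => rw [hpiN]
    exact mem_conjMap pi x (lambda G).range
  -- C : conjugation by p0 sends λ(G) to N
  have hC : Subgroup.map (MulAut.conj p0).toMonoidHom (lambda G).range = N := by
    ext q
    rw [mem_conjMap]
    simp only [MonoidHom.mem_range]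
    constructor
    · rintro ⟨σ, hσ⟩
      have hq : q = p0 * lambda G σ * p0⁻¹ := by
        rw [hσ]; group
      rw [hq, hp0conj]
      exact (hmemN _).2 ⟨σ, rfl⟩
    · intro hq
      obtain ⟨σ, hσ⟩ := (hmemN _).1 hq
      refine ⟨σ, ?_⟩
      rw [hσ, ← hp0conj]
      group
  -- A : pi² ∈ Hol ↔ map (conj pi) N = λ(G)
  have hA : pi ^ 2 ∈ Hol G ↔
      Subgroup.map (MulAut.conj pi).toMonoidHom N = (lambda G).range := by
    rw [← hNnormalizer, Subgroup.mem_normalizer_iff]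
    constructor
    · intro hnorm
      ext x
      rw [mem_conjMap]
      have h1 := hnorm (pi⁻¹ * x * pi)
      have h2 : pi ^ 2 * (pi⁻¹ * x * pi) * (pi ^ 2)⁻¹ = pi * x * pi⁻¹ := by group
      rw [h2] at h1
      have h3 := memN_pi (pi * x * pi⁻¹)
      have h4 : pi⁻¹ * (pi * x * pi⁻¹) * pi = x := by group
      rw [h4] at h3
      rw [h1, h3]
    · intro hmap b
      have h3 := memN_pi (pi ^ 2 * b * (pi ^ 2)⁻¹)
      have h4 : pi⁻¹ * (pi ^ 2 * b * (pi ^ 2)⁻¹) * pi = pi * b * pi⁻¹ := by group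
      rw [h4] at h3
      rw [← hmap, mem_conjMap] at h3
      have h5 : pi⁻¹ * (pi * b * pi⁻¹) * pi = b := by group
      rw [h5] at h3
      exact h3.symm
  -- B : map (conj pi) N = map (conj p0) N
  have hB : Subgroup.map (MulAut.conj pi).toMonoidHom N
      = Subgroup.map (MulAut.conj p0).toMonoidHom N := by
    have hsHol : pi⁻¹ * p0 ∈ Hol G := by
      rw [hHol, Subgroup.mem_normalizer_iff]
      intro q
      have e1 : q ∈ (lambda G).range ↔ p0 * q * p0⁻¹ ∈ N := by
        rw [← hC, mem_conjMap]
        have e0 : p0⁻¹ * (p0 * q * p0⁻¹) * p0 = q := by group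
        rw [e0]
      have e2 := memN_pi (p0 * q * p0⁻¹)
      have e3 : pi⁻¹ * (p0 * q * p0⁻¹) * pi
          = (pi⁻¹ * p0) * q * (pi⁻¹ * p0)⁻¹ := by group
      rw [e3] at e2
      exact e1.trans e2
    have hsN : ∀ q : Equiv.Perm G, q ∈ N ↔ (pi⁻¹ * p0) * q * (pi⁻¹ * p0)⁻¹ ∈ N :=
      Subgroup.mem_normalizer_iff.mp (by rw [hNnormalizer]; exact hsHol)
    ext x
    rw [mem_conjMap, mem_conjMap]
    have e := hsN (p0⁻¹ * x * p0)
    have e2 : (pi⁻¹ * p0) * (p0⁻¹ * x * p0) * (pi⁻¹ * p0)⁻¹ = pi⁻¹ * x * pi := by group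
    rw [e2] at e
    exact e.symm
  -- D : map (conj p0) N = λ(G) ↔ star
  have hD : Subgroup.map (MulAut.conj p0).toMonoidHom N = (lambda G).range ↔
      (∀ σ y : G, g (f σ y * (g σ)⁻¹) = g y * g ((g σ)⁻¹)) := by
    constructor
    · intro hmap σ y
      have hin : p0 * (rho G (g σ) * MulAut.toPerm G (f σ)) * p0⁻¹ ∈ (lambda G).range := by
        rw [← hmap, mem_conjMap]
        have e0 : p0⁻¹ * (p0 * (rho G (g σ) * MulAut.toPerm G (f σ)) * p0⁻¹) * p0
            = rho G (g σ) * MulAut.toPerm G (f σ) := by group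
        rw [e0]
        exact (hmemN _).2 ⟨σ, rfl⟩
      obtain ⟨τ, hτ⟩ := MonoidHom.mem_range.mp hin
      have ev : ∀ x : G, τ * x = (g (f σ (g.symm x⁻¹) * (g σ)⁻¹))⁻¹ := by
        intro x
        have hthis := DFunLike.congr_fun hτ x
        change τ * x = (g (f σ (g.symm x⁻¹) * (g σ)⁻¹))⁻¹ at hthis
        exact hthis
      have ev1 := ev 1
      rw [mul_one, inv_one, hgsymm1, map_one, one_mul] at ev1
      have ev2 := ev (g y)⁻¹
      rw [inv_inv, Equiv.symm_apply_apply, ev1, ← mul_inv_rev] at ev2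
      exact inv_injective ev2.symm
    · intro hstar
      have hkey : ∀ σ : G, p0 * (rho G (g σ) * MulAut.toPerm G (f σ)) * p0⁻¹
          = lambda G (g ((g σ)⁻¹))⁻¹ := by
        intro σ
        ext x
        show (g (f σ (g.symm x⁻¹) * (g σ)⁻¹))⁻¹ = (g ((g σ)⁻¹))⁻¹ * x
        rw [hstar σ (g.symm x⁻¹), Equiv.apply_symm_apply, mul_inv_rev, inv_inv]
      ext q
      rw [mem_conjMap]
      simp only [MonoidHom.mem_range]
      constructor
      · intro hq
        obtain ⟨σ, hσ⟩ := (hmemN _).1 hq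
        refine ⟨(g ((g σ)⁻¹))⁻¹, ?_⟩
        rw [← hkey σ, ← hσ]
        group
      · rintro ⟨τ, hτ⟩
        have hgσ : g (g.symm (g.symm τ⁻¹)⁻¹) = (g.symm τ⁻¹)⁻¹ := Equiv.apply_symm_apply _ _
        have h2 : g ((g (g.symm (g.symm τ⁻¹)⁻¹))⁻¹) = τ⁻¹ := by
          rw [hgσ, inv_inv, Equiv.apply_symm_apply]
        have hkey2 := hkey (g.symm (g.symm τ⁻¹)⁻¹)
        rw [h2, inv_inv, hτ] at hkey2
        rw [← hkey2]
        have e0 : p0⁻¹ * (p0 * (rho G (g (g.symm (g.symm τ⁻¹)⁻¹))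
            * MulAut.toPerm G (f (g.symm (g.symm τ⁻¹)⁻¹))) * p0⁻¹) * p0
            = rho G (g (g.symm (g.symm τ⁻¹)⁻¹))
              * MulAut.toPerm G (f (g.symm (g.symm τ⁻¹)⁻¹)) := by group
        rw [e0]
        exact (hmemN _).2 ⟨_, rfl⟩
  -- assemble
  rw [hA, hB, hD, hstar_iff]
  constructor
  · rintro ⟨c1, c2⟩
    exact ⟨fun σ τ => (hkerf σ τ).2 ((haC1.2 c1) σ τ),
      fun σ τ => (hkerh σ τ).2 ((hbC2.2 c2) σ τ)⟩
  · rintro ⟨ka, kb⟩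
    exact ⟨haC1.1 (fun σ τ => (hkerf σ τ).1 (ka σ τ)),
      hbC2.1 (fun σ τ => (hkerh σ τ).1 (kb σ τ))⟩
end

section
/- In the setup (G centerless, f, h : G → Aut(G) with h(σ) = conj(g(σ))∘f(σ), g a bijection satisfying g(στ) = g(σ)·f(σ)(g(τ)), and N = {ρ(g(σ))∘f(σ) : σ ∈ G} a normal subgroup of Hol(G)), suppose moreover that π ∈ Perm(G) satisfies N = πλ(G)π⁻¹ and that the normalizer of N in Perm(G) equals Hol(G). If g(ker(f)) ⊆ ker(f) and g(ker(h)) ⊆ ker(h), then π² ∈ Hol(G). -/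
/-- Auxiliary predicate: `x` lies in the image under `g` of the kernel of `h`. -/
def gKer {G : Type*} [Group G] (h : G →* MulAut G) (g : Equiv.Perm G) (x : G) : Prop :=
  ∃ κ : G, h κ = 1 ∧ x = g κ

/-- In the setup, if moreover `π ∈ Perm(G)` satisfies `N = πλ(G)π⁻¹`,
the normalizer of `N` in `Perm(G)` is `Hol(G)`, and `g(ker f) ⊆ ker f` and
`g(ker h) ⊆ ker h`, then `π² ∈ Hol(G)`. -/
theorem pi_sq_mem_Hol_of_g_preserves_kernels
    (G : Type*) [Group G] (hZ : Subgroup.center G = ⊥)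
    (f h : G →* MulAut G) (g : Equiv.Perm G) (hg1 : g 1 = 1)
    (hrel : ∀ σ τ : G, g (σ * τ) = g σ * (f σ) (g τ))
    (hh : ∀ σ : G, h σ = MulAut.conj (g σ) * f σ)
    (N : Subgroup (Equiv.Perm G))
    (hN : (N : Set (Equiv.Perm G))
      = {q | ∃ σ : G, q = rho G (g σ) * MulAut.toPerm G (f σ)})
    (hNle : N ≤ Hol G)
    (hNnorm : ∀ x ∈ Hol G, ∀ n ∈ N, x * n * x⁻¹ ∈ N)
    (pi : Equiv.Perm G)
    (hpiN : N = Subgroup.map (MulAut.conj pi).toMonoidHom (lambda G).range)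
    (hNnormalizer : Subgroup.normalizer (N : Set (Equiv.Perm G)) = Hol G)
    (hgf : ⇑g '' (f.ker : Set G) ⊆ (f.ker : Set G))
    (hgh : ⇑g '' (h.ker : Set G) ⊆ (h.ker : Set G))
    :
    pi ^ 2 ∈ Hol G := by
  classical
  -- pointwise application lemmas
  have lam_app : ∀ (σ x : G), lambda G σ x = σ * x := fun _ _ => rfl
  have rho_app : ∀ (σ x : G), rho G σ x = x * σ⁻¹ := fun _ _ => rfl
  have tp_app : ∀ (α : MulAut G) (x : G), MulAut.toPerm G α x = α x := fun _ _ => rfl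
  have lam_inv : ∀ τ : G, (lambda G τ)⁻¹ = lambda G τ⁻¹ := fun τ => (map_inv (lambda G) τ).symm
  have rho_inv : ∀ τ : G, (rho G τ)⁻¹ = rho G τ⁻¹ := fun τ => (map_inv (rho G) τ).symm
  have tp_inv : ∀ α : MulAut G, (MulAut.toPerm G α)⁻¹ = MulAut.toPerm G α⁻¹ :=
    fun α => (map_inv (MulAut.toPerm G) α).symm
  have mem_N : ∀ q : Equiv.Perm G,
      q ∈ N ↔ ∃ σ : G, q = rho G (g σ) * MulAut.toPerm G (f σ) := by
    intro q
    constructor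
    · intro hq
      have hq' : q ∈ (N : Set (Equiv.Perm G)) := hq
      rw [hN] at hq'
      exact hq'
    · intro hq
      have hq' : q ∈ (N : Set (Equiv.Perm G)) := by rw [hN]; exact hq
      exact hq'
  have h_app : ∀ σ x : G, h σ x = g σ * f σ x * (g σ)⁻¹ := by
    intro σ x
    rw [hh σ]
    simp [MulAut.conj_apply]
  -- kernel preservation, elementwise
  have hgf' : ∀ k : G, f k = 1 → f (g k) = 1 := by
    intro k hk
    have : g k ∈ (f.ker : Set G) := hgf ⟨k, by simp [MonoidHom.mem_ker, hk], rfl⟩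
    simpa [MonoidHom.mem_ker] using this
  have hgh' : ∀ k : G, h k = 1 → h (g k) = 1 := by
    intro k hk
    have : g k ∈ (h.ker : Set G) := hgh ⟨k, by simp [MonoidHom.mem_ker, hk], rfl⟩
    simpa [MonoidHom.mem_ker] using this
  -- trivial intersection of the kernels
  have triv : ∀ x : G, f x = 1 → h x = 1 → x = 1 := by
    intro x hf1 hh1
    have hcj : MulAut.conj (g x) = 1 := by
      have e := hh x
      rw [hf1, mul_one, hh1] at e
      exact e.symm
    have hgx : g x ∈ Subgroup.center G := by
      rw [Subgroup.mem_center_iff]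
      intro y
      have e := congrArg (fun (e : MulAut G) => e y) hcj
      simp only [MulAut.conj_apply, MulAut.one_apply] at e
      calc y * g x = (g x * y * (g x)⁻¹) * g x := by rw [e]
        _ = g x * y := by group
    rw [hZ, Subgroup.mem_bot] at hgx
    have : g x = g 1 := by rw [hgx, hg1]
    exact g.injective this
  -- inverse formula
  have g_inv : ∀ σ : G, f σ (g σ⁻¹) = (g σ)⁻¹ := by
    intro σ
    have h1 : g (σ * σ⁻¹) = g σ * f σ (g σ⁻¹) := hrel σ σ⁻¹
    rw [mul_inv_cancel, hg1] at h1
    exact (inv_eq_of_mul_eq_one_right h1.symm).symm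
  -- action of f on elements of ker h
  have fK : ∀ κ : G, h κ = 1 → ∀ y : G, f κ y = (g κ)⁻¹ * y * g κ := by
    intro κ hκ y
    have e1 : h κ y = y := by rw [hκ]; rfl
    rw [h_app] at e1
    calc f κ y = (g κ)⁻¹ * (g κ * f κ y * (g κ)⁻¹) * g κ := by group
      _ = (g κ)⁻¹ * y * g κ := by rw [e1]
  have gK_mul : ∀ κ z : G, h κ = 1 → g (κ * z) = g z * g κ := by
    intro κ z hκ
    rw [hrel, fK κ hκ]
    group
  -- memberships in Hol
  have hHol : Hol G = Subgroup.normalizer ((lambda G).range : Set (Equiv.Perm G)) := rfl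
  have lam_mem_Hol : ∀ σ : G, lambda G σ ∈ Hol G := by
    intro σ
    rw [hHol]
    exact Subgroup.le_normalizer ⟨σ, rfl⟩
  have rho_conj_lam : ∀ τ σ : G, rho G τ * lambda G σ * (rho G τ)⁻¹ = lambda G σ := by
    intro τ σ
    ext x
    simp only [rho_inv, Equiv.Perm.mul_apply, rho_app, lam_app]
    group
  have rho_mem_Hol : ∀ τ : G, rho G τ ∈ Hol G := by
    intro τ
    rw [hHol, Subgroup.mem_normalizer_iff]
    intro q
    constructor
    · rintro ⟨σ, rfl⟩
      exact ⟨σ, (rho_conj_lam τ σ).symm⟩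
    · rintro ⟨σ, hσ⟩
      refine ⟨σ, ?_⟩
      have e2 : (rho G τ)⁻¹ * lambda G σ * rho G τ = lambda G σ := by
        conv_lhs => rw [← rho_conj_lam τ σ]
        group
      have e3 : q = (rho G τ)⁻¹ * lambda G σ * rho G τ := by rw [hσ]; group
      rw [e3, e2]
  have aut_conj_lam : ∀ (α : MulAut G) (σ : G),
      MulAut.toPerm G α * lambda G σ * (MulAut.toPerm G α)⁻¹ = lambda G (α σ) := by
    intro α σ
    ext x
    simp only [tp_inv, Equiv.Perm.mul_apply, tp_app, lam_app, map_mul, MulAut.apply_inv_self]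
  have aut_mem_Hol : ∀ α : MulAut G, MulAut.toPerm G α ∈ Hol G := by
    intro α
    rw [hHol, Subgroup.mem_normalizer_iff]
    intro q
    constructor
    · rintro ⟨σ, rfl⟩
      exact ⟨α σ, (aut_conj_lam α σ).symm⟩
    · rintro ⟨σ, hσ⟩
      refine ⟨α⁻¹ σ, ?_⟩
      have e1 : MulAut.toPerm G α * lambda G (α⁻¹ σ) * (MulAut.toPerm G α)⁻¹ = lambda G σ := by
        rw [aut_conj_lam α (α⁻¹ σ), MulAut.apply_inv_self]
      have e3 : q = (MulAut.toPerm G α)⁻¹ * lambda G σ * MulAut.toPerm G α := by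
        rw [hσ]; group
      rw [e3, ← e1]
      group
  -- ===== consequence (E) of normality : fσ(τ)·τ⁻¹ ∈ g(ker h) =====
  have L2 : ∀ σ τ : G, ∃ κ : G, h κ = 1 ∧ f σ τ * τ⁻¹ = g κ := by
    intro σ τ0
    obtain ⟨σ'', hσ''⟩ := (mem_N _).1 (hNnorm (lambda G (f σ τ0)) (lam_mem_Hol _) _
      ((mem_N _).2 ⟨σ, rfl⟩))
    rw [lam_inv] at hσ''
    have e : ∀ x : G, f σ τ0 * (f σ ((f σ τ0)⁻¹ * x) * (g σ)⁻¹) = f σ'' x * (g σ'')⁻¹ :=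
      fun x => Equiv.ext_iff.1 hσ'' x
    have e1 : g σ'' = g σ * f σ (f σ τ0) * (f σ τ0)⁻¹ := by
      have e0 := e 1
      rw [mul_one, map_inv, map_one, one_mul] at e0
      apply inv_injective
      rw [← e0]
      group
    have e2 : ∀ x : G, f σ'' x
        = f σ τ0 * (f σ (f σ τ0))⁻¹ * f σ x * f σ (f σ τ0) * (f σ τ0)⁻¹ := by
      intro x
      have ex := e x
      rw [map_mul, map_inv] at ex
      have : f σ'' x = f σ τ0 * ((f σ (f σ τ0))⁻¹ * f σ x * (g σ)⁻¹) * g σ'' := by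
        rw [ex]; group
      rw [this, e1]; group
    have e3 : h σ'' = h σ := by
      apply MulEquiv.ext
      intro x
      rw [h_app, h_app, e2 x, e1]
      group
    have hκ1 : h (σ⁻¹ * σ'') = 1 := by
      rw [map_mul, map_inv, e3, inv_mul_cancel]
    have e4 : f σ (g (σ⁻¹ * σ'')) = f σ (f σ τ0) * (f σ τ0)⁻¹ := by
      have e5 : g (σ * (σ⁻¹ * σ'')) = g σ * f σ (g (σ⁻¹ * σ'')) := hrel _ _
      rw [mul_inv_cancel_left, e1] at e5
      have e6 : g σ * (f σ (f σ τ0) * (f σ τ0)⁻¹) = g σ * f σ (g (σ⁻¹ * σ'')) := by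
        rw [← e5]; group
      exact (mul_left_cancel e6).symm
    refine ⟨σ⁻¹ * σ'', hκ1, (f σ).injective ?_⟩
    rw [e4, map_mul, map_inv]
  -- ===== consequence (I) of normality : hσ(τ)·τ⁻¹ ∈ g(ker f) =====
  have L3raw : ∀ s τ : G, ∃ k : G, f k = 1 ∧
      f s (g k) = (g s)⁻¹ * (τ * g s * (f s τ)⁻¹) := by
    intro s τ
    obtain ⟨σ₃, hσ₃⟩ := (mem_N _).1 (hNnorm (rho G τ) (rho_mem_Hol τ) _
      ((mem_N _).2 ⟨s, rfl⟩))
    rw [rho_inv] at hσ₃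
    have e0 : ∀ x : G, f s (x * τ⁻¹⁻¹) * (g s)⁻¹ * τ⁻¹ = f σ₃ x * (g σ₃)⁻¹ :=
      fun x => Equiv.ext_iff.1 hσ₃ x
    have e : ∀ x : G, f s (x * τ) * (g s)⁻¹ * τ⁻¹ = f σ₃ x * (g σ₃)⁻¹ := by
      intro x
      have := e0 x
      rwa [inv_inv] at this
    have e1 : g σ₃ = τ * g s * (f s τ)⁻¹ := by
      have e0' := e 1
      rw [one_mul, map_one, one_mul] at e0'
      apply inv_injective
      rw [← e0']
      group
    have e2 : ∀ x : G, f σ₃ x = f s x := by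
      intro x
      have ex := e x
      rw [map_mul] at ex
      calc f σ₃ x = f σ₃ x * (g σ₃)⁻¹ * g σ₃ := by group
        _ = f s x * f s τ * (g s)⁻¹ * τ⁻¹ * g σ₃ := by rw [← ex]
        _ = f s x := by rw [e1]; group
    have e3 : f σ₃ = f s := MulEquiv.ext e2
    have hk1 : f (s⁻¹ * σ₃) = 1 := by
      rw [map_mul, map_inv, e3, inv_mul_cancel]
    refine ⟨s⁻¹ * σ₃, hk1, ?_⟩
    have e5 : g (s * (s⁻¹ * σ₃)) = g s * f s (g (s⁻¹ * σ₃)) := hrel _ _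
    rw [mul_inv_cancel_left, e1] at e5
    have e6 : g s * ((g s)⁻¹ * (τ * g s * (f s τ)⁻¹)) = g s * f s (g (s⁻¹ * σ₃)) := by
      rw [← e5]; group
    exact (mul_left_cancel e6).symm
  have L3 : ∀ σ τ : G, ∃ k : G, f k = 1 ∧ h σ τ * τ⁻¹ = g k := by
    intro σ τ
    obtain ⟨k, hk, hk2⟩ := L3raw σ⁻¹ τ
    refine ⟨k, hk, ((f σ⁻¹).injective ?_).symm⟩
    have hv : g σ⁻¹ = ((f σ)⁻¹ (g σ))⁻¹ := by
      apply (f σ).injective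
      rw [g_inv σ, map_inv (f σ) ((f σ)⁻¹ (g σ)), MulAut.apply_inv_self]
    have hfσ : f σ⁻¹ (g σ * f σ τ * (g σ)⁻¹) = (f σ)⁻¹ (g σ) * τ * ((f σ)⁻¹ (g σ))⁻¹ := by
      rw [map_inv f σ, map_mul ((f σ)⁻¹), map_mul ((f σ)⁻¹),
        map_inv ((f σ)⁻¹) (g σ), MulAut.inv_apply_self]
    rw [hk2, map_mul (f σ⁻¹), map_inv (f σ⁻¹) τ, h_app σ τ, hfσ, hv, map_inv f σ]
    group
  -- ===== consequence of normality under automorphisms : conj-stability of g(ker h) =====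
  have L4 : ∀ τ a : G, gKer h g a → gKer h g (τ * a * τ⁻¹) := by
    rintro τ a ⟨κ, hκ, rfl⟩
    obtain ⟨κ', hκ'⟩ := (mem_N _).1 (hNnorm (MulAut.toPerm G (MulAut.conj τ))
      (aut_mem_Hol _) _ ((mem_N _).2 ⟨κ, rfl⟩))
    rw [tp_inv, ← map_inv MulAut.conj τ] at hκ'
    have e : ∀ x : G,
        MulAut.conj τ (f κ (MulAut.conj τ⁻¹ x) * (g κ)⁻¹) = f κ' x * (g κ')⁻¹ :=
      fun x => Equiv.ext_iff.1 hκ' x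
    have e' : ∀ x : G, τ * (f κ (τ⁻¹ * x * τ⁻¹⁻¹) * (g κ)⁻¹) * τ⁻¹ = f κ' x * (g κ')⁻¹ := by
      intro x
      have := e x
      rwa [MulAut.conj_apply, MulAut.conj_apply] at this
    have e1 : g κ' = τ * g κ * τ⁻¹ := by
      have e0 := e' 1
      rw [map_one, one_mul] at e0
      apply inv_injective
      rw [← e0, fK κ hκ]
      group
    have e2 : ∀ x : G, f κ' x = (g κ')⁻¹ * x * g κ' := by
      intro x
      have ex := e' x
      have : f κ' x = τ * (f κ (τ⁻¹ * x * τ⁻¹⁻¹) * (g κ)⁻¹) * τ⁻¹ * g κ' := by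
        rw [ex]; group
      rw [this, fK κ hκ, e1]
      group
    have hκ'1 : h κ' = 1 := by
      apply MulEquiv.ext
      intro x
      rw [h_app, e2 x, MulAut.one_apply]
      group
    exact ⟨κ', hκ'1, e1.symm⟩
  -- ===== the gKer (Q-membership) calculus =====
  have Qm_ker : ∀ x : G, gKer h g x → h x = 1 := by
    rintro x ⟨κ, hκ, rfl⟩
    exact hgh' κ hκ
  have Qm_g : ∀ x : G, gKer h g x → gKer h g (g x) :=
    fun x hx => ⟨x, Qm_ker x hx, rfl⟩
  have Qm_mul : ∀ a b : G, gKer h g a → gKer h g b → gKer h g (a * b) := by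
    rintro a b ⟨κ₁, h1, rfl⟩ ⟨κ₂, h2, rfl⟩
    refine ⟨κ₂ * κ₁, by rw [map_mul, h1, h2, one_mul], ?_⟩
    rw [gK_mul κ₂ κ₁ h2]
  have Qm_fd : ∀ σ τ : G, gKer h g (f σ τ * τ⁻¹) := by
    intro σ τ
    obtain ⟨κ, h1, h2⟩ := L2 σ τ
    exact ⟨κ, h1, h2⟩
  have Qm_f : ∀ (σ a : G), gKer h g a → gKer h g (f σ a) := by
    intro σ a ha
    have := Qm_mul _ _ (Qm_fd σ a) ha
    rwa [inv_mul_cancel_right] at this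
  -- ===== the key intertwining identity =====
  have star8 : ∀ s z : G, g (h s z) = h (g s) (g z) := by
    intro s z
    -- f-part
    have hfX : f (g (h s z) * (h (g s) (g z))⁻¹) = 1 := by
      obtain ⟨k, hk, hgk⟩ := L3 s z
      obtain ⟨k', hk', hgk'⟩ := L3 (g s) (g z)
      have e1 : h s z = g k * z := by rw [← hgk]; group
      have e2 : g (h s z) = g (g k) * g z := by
        rw [e1, hrel, hgf' k hk, MulAut.one_apply]
      have e3 : h (g s) (g z) = g k' * g z := by rw [← hgk']; group
      have eX : g (h s z) * (h (g s) (g z))⁻¹ = g (g k) * (g k')⁻¹ := by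
        rw [e2, e3]; group
      rw [eX, map_mul, map_inv, hgf' (g k) (hgf' k hk), hgf' k' hk']
      simp
    -- h-part, via the gKer calculus
    have hA2 : g ((g s)⁻¹) = f ((g s)⁻¹) ((g (g s))⁻¹) := by
      apply (f (g s)).injective
      rw [g_inv (g s), map_inv f (g s), MulAut.apply_inv_self]
    have hA3 : g (z * (g s)⁻¹) = g z * f (z * (g s)⁻¹) ((g (g s))⁻¹) := by
      rw [hrel z ((g s)⁻¹), hA2, ← MulAut.mul_apply, ← map_mul]
    have hA4 : g (g s * z * (g s)⁻¹)
        = g (g s) * (f (g s) (g z)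
          * (f (g s) (f (z * (g s)⁻¹) ((g (g s))⁻¹) * g (g s))
            * f (g s) ((g (g s))⁻¹))) := by
      have ee : g s * z * (g s)⁻¹ = g s * (z * (g s)⁻¹) := by group
      rw [ee, hrel (g s) (z * (g s)⁻¹), hA3, map_mul,
        map_mul (f (g s)) (f (z * (g s)⁻¹) ((g (g s))⁻¹)) (g (g s)),
        map_inv (f (g s))]
      group
    have hq2m : gKer h g (g s * (f s z * z⁻¹) * (g s)⁻¹) := L4 (g s) _ (Qm_fd s z)
    have hhq2 : h (g s * (f s z * z⁻¹) * (g s)⁻¹) = 1 := Qm_ker _ hq2m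
    have hA1 : g (h s z)
        = g (g s * z * (g s)⁻¹) * g (g s * (f s z * z⁻¹) * (g s)⁻¹) := by
      have e : h s z = (g s * (f s z * z⁻¹) * (g s)⁻¹) * (g s * z * (g s)⁻¹) := by
        rw [h_app]; group
      rw [e, gK_mul _ _ hhq2]
    have hA5 : h (g s) (g z) = g (g s) * f (g s) (g z) * (g (g s))⁻¹ := h_app (g s) (g z)
    have hXeq : g (h s z) * (h (g s) (g z))⁻¹
        = g (g s) * (f (g s) (g z)
            * (f (g s) (f (z * (g s)⁻¹) ((g (g s))⁻¹) * g (g s))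
              * ((f (g s) ((g (g s))⁻¹) * g (g s))
                * ((g (g s))⁻¹ * g (g s * (f s z * z⁻¹) * (g s)⁻¹) * ((g (g s))⁻¹)⁻¹)))
          * (f (g s) (g z))⁻¹) * (g (g s))⁻¹ := by
      rw [hA1, hA4, hA5]
      group
    have hq3 : gKer h g (f (z * (g s)⁻¹) ((g (g s))⁻¹) * g (g s)) := by
      have := Qm_fd (z * (g s)⁻¹) ((g (g s))⁻¹)
      rwa [inv_inv] at this
    have hq6 : gKer h g (f (g s) ((g (g s))⁻¹) * g (g s)) := by
      have := Qm_fd (g s) ((g (g s))⁻¹)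
      rwa [inv_inv] at this
    have hQX : gKer h g (g (h s z) * (h (g s) (g z))⁻¹) := by
      rw [hXeq]
      exact L4 _ _ (L4 _ _ (Qm_mul _ _ (Qm_f (g s) _ hq3)
        (Qm_mul _ _ hq6 (L4 _ _ (Qm_g _ hq2m)))))
    have hX1 : g (h s z) * (h (g s) (g z))⁻¹ = 1 := triv _ hfX (Qm_ker _ hQX)
    exact mul_inv_eq_one.mp hX1
  -- ===== multiplicativity of Φ(x) = g(g(x)⁻¹)⁻¹ =====
  have gbar : ∀ a b : G, (g (a * b))⁻¹ = (g a)⁻¹ * h a ((g b)⁻¹) := by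
    intro a b
    rw [hrel, h_app, map_inv (f a)]
    group
  have hcanc : ∀ (a w : G), h ((g a)⁻¹) (h (g a) w) = w := by
    intro a w
    rw [← MulAut.mul_apply, ← map_mul, inv_mul_cancel, map_one, MulAut.one_apply]
  have Phi_mul : ∀ a b : G, (g ((g (a * b))⁻¹))⁻¹ = (g ((g a)⁻¹))⁻¹ * (g ((g b)⁻¹))⁻¹ := by
    intro a b
    rw [gbar a b, gbar ((g a)⁻¹) (h a ((g b)⁻¹)), star8 a ((g b)⁻¹),
      ← map_inv (h (g a)), hcanc a]
  -- ===== the permutation-level glue =====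
  set p0 : Equiv.Perm G := g.trans (Equiv.inv G) with hp0
  have p0_app : ∀ x : G, p0 x = (g x)⁻¹ := fun _ => rfl
  have p0_inv_app : ∀ x : G, p0⁻¹ x = g.symm x⁻¹ := by
    intro x
    apply p0.injective
    rw [← Equiv.Perm.mul_apply, mul_inv_cancel, Equiv.Perm.one_apply, p0_app, Equiv.apply_symm_apply, inv_inv]
  have hp0conj : ∀ σ : G, p0 * lambda G σ * p0⁻¹ = rho G (g σ) * MulAut.toPerm G (f σ) := by
    intro σ
    ext x
    rw [Equiv.Perm.mul_apply, Equiv.Perm.mul_apply, p0_inv_app, lam_app, p0_app,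
      hrel, Equiv.apply_symm_apply, map_inv (f σ), Equiv.Perm.mul_apply, rho_app, tp_app]
    group
  have hmapp0 : Subgroup.map (MulAut.conj p0).toMonoidHom (lambda G).range = N := by
    ext q
    rw [Subgroup.mem_map]
    constructor
    · rintro ⟨x, hx, rfl⟩
      obtain ⟨σ, rfl⟩ := hx
      rw [mem_N]
      refine ⟨σ, ?_⟩
      calc (MulAut.conj p0).toMonoidHom (lambda G σ)
          = p0 * lambda G σ * p0⁻¹ := by simp [MulAut.conj_apply]
        _ = rho G (g σ) * MulAut.toPerm G (f σ) := hp0conj σ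
    · intro hq
      obtain ⟨σ, rfl⟩ := (mem_N q).1 hq
      refine ⟨lambda G σ, ⟨σ, rfl⟩, ?_⟩
      calc (MulAut.conj p0).toMonoidHom (lambda G σ)
          = p0 * lambda G σ * p0⁻¹ := by simp [MulAut.conj_apply]
        _ = rho G (g σ) * MulAut.toPerm G (f σ) := hp0conj σ
  have hmapHol : Subgroup.map (MulAut.conj p0).toMonoidHom (Hol G) = Hol G := by
    have e := Subgroup.map_equiv_normalizer_eq (lambda G).range (MulAut.conj p0)
    rw [hHol, e, hmapp0, hNnormalizer, hHol]
  have keyN : ∀ q : Equiv.Perm G, q ∈ N ↔ ∃ σ : G, q = pi * lambda G σ * pi⁻¹ := by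
    intro q
    rw [hpiN, Subgroup.mem_map]
    constructor
    · rintro ⟨x, hx, rfl⟩
      obtain ⟨σ, rfl⟩ := hx
      exact ⟨σ, by simp [MulAut.conj_apply]⟩
    · rintro ⟨σ, rfl⟩
      exact ⟨lambda G σ, ⟨σ, rfl⟩, by simp [MulAut.conj_apply]⟩
  have keyN0 : ∀ q : Equiv.Perm G, q ∈ N ↔ ∃ σ : G, q = p0 * lambda G σ * p0⁻¹ := by
    intro q
    rw [← hmapp0, Subgroup.mem_map]
    constructor
    · rintro ⟨x, hx, rfl⟩
      obtain ⟨σ, rfl⟩ := hx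
      exact ⟨σ, by simp [MulAut.conj_apply]⟩
    · rintro ⟨σ, rfl⟩
      exact ⟨lambda G σ, ⟨σ, rfl⟩, by simp [MulAut.conj_apply]⟩
  have key1 : ∀ σ : G, ∃ σ' : G, pi * lambda G σ * pi⁻¹ = p0 * lambda G σ' * p0⁻¹ :=
    fun σ => (keyN0 _).1 ((keyN _).2 ⟨σ, rfl⟩)
  have key2 : ∀ σ : G, ∃ σ' : G, p0 * lambda G σ * p0⁻¹ = pi * lambda G σ' * pi⁻¹ :=
    fun σ => (keyN _).1 ((keyN0 _).2 ⟨σ, rfl⟩)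
  have hc : p0⁻¹ * pi ∈ Hol G := by
    rw [hHol, Subgroup.mem_normalizer_iff]
    intro q
    constructor
    · rintro ⟨σ, rfl⟩
      obtain ⟨σ', h'⟩ := key1 σ
      refine ⟨σ', ?_⟩
      have e0 : (p0⁻¹ * pi) * lambda G σ * (p0⁻¹ * pi)⁻¹
          = p0⁻¹ * (pi * lambda G σ * pi⁻¹) * p0 := by group
      rw [e0, h']
      group
    · rintro ⟨σ', h'⟩
      obtain ⟨σ'', h''⟩ := key2 σ'
      refine ⟨σ'', ?_⟩
      have e1 : q = pi⁻¹ * (p0 * lambda G σ' * p0⁻¹) * pi := by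
        rw [h']; group
      rw [e1, h'']
      group
  have hd : p0⁻¹ * (p0⁻¹ * pi) * p0 ∈ Hol G := by
    have hmem : p0⁻¹ * pi ∈ Subgroup.map (MulAut.conj p0).toMonoidHom (Hol G) := by
      rw [hmapHol]; exact hc
    rw [Subgroup.mem_map] at hmem
    obtain ⟨d, hdHol, hdeq⟩ := hmem
    have e : p0 * d * p0⁻¹ = p0⁻¹ * pi := by
      rw [← hdeq]; simp [MulAut.conj_apply]
    have e2 : p0⁻¹ * (p0⁻¹ * pi) * p0 = d := by
      rw [← e]; group
    rw [e2]; exact hdHol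
  have p0sq_app : ∀ x : G, (p0 * p0) x = (g ((g x)⁻¹))⁻¹ := by
    intro x
    rw [Equiv.Perm.mul_apply, p0_app, p0_app]
  have Phi_surj : ∀ y : G, ∃ x : G, (g ((g x)⁻¹))⁻¹ = y := by
    intro y
    refine ⟨g.symm ((g.symm y⁻¹)⁻¹), ?_⟩
    rw [Equiv.apply_symm_apply, inv_inv, Equiv.apply_symm_apply, inv_inv]
  have conj_p0sq : ∀ σ : G,
      (p0 * p0) * lambda G σ * (p0 * p0)⁻¹ = lambda G ((g ((g σ)⁻¹))⁻¹) := by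
    intro σ
    ext x
    rw [Equiv.Perm.mul_apply, Equiv.Perm.mul_apply, lam_app, lam_app, p0sq_app,
      Phi_mul σ ((p0 * p0)⁻¹ x)]
    congr 1
    rw [← p0sq_app, ← Equiv.Perm.mul_apply, mul_inv_cancel, Equiv.Perm.one_apply]
  have hp0sq : p0 * p0 ∈ Hol G := by
    rw [hHol, Subgroup.mem_normalizer_iff]
    intro q
    constructor
    · rintro ⟨σ, rfl⟩
      exact ⟨(g ((g σ)⁻¹))⁻¹, (conj_p0sq σ).symm⟩
    · rintro ⟨τ, hτ⟩
      obtain ⟨σ, hσ⟩ := Phi_surj τ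
      refine ⟨σ, ?_⟩
      have e1 : (p0 * p0) * lambda G σ * (p0 * p0)⁻¹ = lambda G τ := by
        rw [conj_p0sq σ, hσ]
      have e2 : (p0 * p0) * lambda G σ * (p0 * p0)⁻¹ = (p0 * p0) * q * (p0 * p0)⁻¹ := by
        rw [e1, hτ]
      exact mul_left_cancel (mul_right_cancel e2)
  have hfin : pi ^ 2 = (p0 * p0) * ((p0⁻¹ * (p0⁻¹ * pi) * p0) * (p0⁻¹ * pi)) := by
    rw [pow_two]; group
  rw [hfin]
  exact mul_mem hp0sq (mul_mem hd hc)
end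

section
/- Let G be any group, f : G → Aut(G) a homomorphism, g : G → G a bijection with g(1) = 1 satisfying g(στ) = g(σ)·f(σ)(g(τ)) for all σ, τ ∈ G, and define h : G → Aut(G) by h(σ) = conj(g(σ))∘f(σ). Assume N = {ρ(g(σ))∘f(σ) : σ ∈ G} is a normal subgroup of Hol(G). Then for any φ ∈ Aut(G) and σ ∈ G, letting σ_φ ∈ G be the unique element with φ(g(σ)) = g(σ_φ), one has φ∘f(σ)∘φ⁻¹ = f(σ_φ) and φ∘h(σ)∘φ⁻¹ = h(σ_φ). -/
/-- Let `G` be any group, `f : G →* Aut(G)`, `g` a bijection of `G`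
with `g(1) = 1` and `g(στ) = g(σ)·f(σ)(g(τ))`, `h(σ) = conj(g(σ))∘f(σ)`, and assume
`N = {ρ(g(σ))∘f(σ) : σ ∈ G}` is a normal subgroup of `Hol(G)`. Then for any
`φ ∈ Aut(G)` and `σ ∈ G`, letting `σ_φ` be the (unique) element with
`φ(g(σ)) = g(σ_φ)`, one has `φ∘f(σ)∘φ⁻¹ = f(σ_φ)` and `φ∘h(σ)∘φ⁻¹ = h(σ_φ)`. -/
theorem conj_f_and_h_by_aut
    (G : Type*) [Group G]
    (f h : G →* MulAut G) (g : Equiv.Perm G) (hg1 : g 1 = 1)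
    (hrel : ∀ σ τ : G, g (σ * τ) = g σ * (f σ) (g τ))
    (hh : ∀ σ : G, h σ = MulAut.conj (g σ) * f σ)
    (N : Subgroup (Equiv.Perm G))
    (hN : (N : Set (Equiv.Perm G))
      = {q | ∃ σ : G, q = rho G (g σ) * MulAut.toPerm G (f σ)})
    (hNle : N ≤ Hol G)
    (hNnorm : ∀ x ∈ Hol G, ∀ n ∈ N, x * n * x⁻¹ ∈ N) :
    ∀ (φ : MulAut G) (σ σφ : G), φ (g σ) = g σφ →
      φ * f σ * φ⁻¹ = f σφ ∧ φ * h σ * φ⁻¹ = h σφ := by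
  intro φ σ σφ hσφ
  set p : Equiv.Perm G := MulAut.toPerm G φ with hp
  have hpinv : p⁻¹ = MulAut.toPerm G φ⁻¹ := (map_inv (MulAut.toPerm G) φ).symm
  have htp : ∀ (ψ : MulAut G) (x : G), (MulAut.toPerm G ψ) x = ψ x := fun _ _ => rfl
  have htps : ∀ (ψ : MulAut G) (x : G), (MulAut.toPerm G ψ).symm x = ψ.symm x := fun _ _ => rfl
  -- p lies in Hol G
  have hpHol : p ∈ Hol G := by
    rw [Hol, Subgroup.mem_normalizer_iff]
    intro q
    constructor
    · rintro ⟨τ, rfl⟩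
      refine ⟨φ τ, ?_⟩
      ext x
      simp [lambda, hp, hpinv, htp, htps, MulAut.inv_def, Equiv.Perm.inv_def, MulEquiv.coe_toEquiv_symm, map_mul]
    · rintro ⟨τ, hτ⟩
      refine ⟨φ⁻¹ τ, ?_⟩
      have hq : q = p⁻¹ * lambda G τ * p := by
        rw [hτ]; group
      rw [hq]
      ext x
      simp [lambda, hp, hpinv, htp, htps, MulAut.inv_def, Equiv.Perm.inv_def, MulEquiv.coe_toEquiv_symm, map_mul]
  -- the element n = ρ(g σ) * f σ lies in N
  have hnN : rho G (g σ) * MulAut.toPerm G (f σ) ∈ N := by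
    rw [← Subgroup.mem_carrier]
    show _ ∈ (N : Set (Equiv.Perm G))
    rw [hN]; exact ⟨σ, rfl⟩
  have hconj := hNnorm p hpHol _ hnN
  rw [← Subgroup.mem_carrier] at hconj
  rw [show (N.carrier = (N : Set (Equiv.Perm G))) from rfl, hN] at hconj
  obtain ⟨τ, hτ⟩ := hconj
  -- evaluate at an arbitrary x
  have heval : ∀ x : G, φ ((f σ) (φ⁻¹ x)) * (φ (g σ))⁻¹ = (f τ) x * (g τ)⁻¹ := by
    intro x
    have := congrFun (congrArg (fun (e : Equiv.Perm G) => (e : G → G)) hτ) x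
    simp [rho, hp, hpinv, htp, htps, map_inv, map_mul] at this
    simpa [map_inv, map_mul] using this
  -- evaluate at 1 : identify τ with σφ
  have h1 := heval 1
  simp [map_one] at h1
  have hτeq : τ = σφ := g.injective (by rw [← h1, hσφ])
  rw [hτeq] at heval
  -- deduce the f-statement
  have hf : φ * f σ * φ⁻¹ = f σφ := by
    ext x
    have := heval x
    rw [hσφ] at this
    have := mul_right_cancel this
    simpa using this
  refine ⟨hf, ?_⟩
  -- the h-statement
  rw [hh σ, hh σφ, ← hf]
  have hcσ : φ * MulAut.conj (g σ) * φ⁻¹ = MulAut.conj (g σφ) := by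
    ext x
    simp [MulAut.conj, ← hσφ, map_mul, map_inv, mul_assoc]
  calc φ * (MulAut.conj (g σ) * f σ) * φ⁻¹
      = (φ * MulAut.conj (g σ) * φ⁻¹) * (φ * f σ * φ⁻¹) := by group
    _ = MulAut.conj (g σφ) * (φ * f σ * φ⁻¹) := by rw [hcσ]
end

section
/- Let G be any group, f : G → Aut(G) a homomorphism, g : G → G a bijection with g(1) = 1 satisfying g(στ) = g(σ)·f(σ)(g(τ)) for all σ, τ ∈ G, and set N = {ρ(g(σ))∘f(σ) : σ ∈ G}. Let ι : G → G denote the inversion map ι(σ) = σ⁻¹ and put g₀ = ι∘g. Then N = g₀ λ(G) g₀⁻¹ as subgroups of Perm(G). Consequently, if π ∈ Perm(G) satisfies N = πλ(G)π⁻¹ and the normalizer of N in Perm(G) equals Hol(G), then π⁻¹∘g₀ ∈ Hol(G); in particular, if f is the trivial homomorphism then π⁻¹∘ι ∈ Hol(G), and if h defined by h(σ) = conj(g(σ))∘f(σ) is the trivial homomorphism then π ∈ Hol(G). -/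
private lemma mem_norm_of_map_conj_eq {P : Type*} [Group P] (a : P) (H : Subgroup P)
    (h : Subgroup.map (MulAut.conj a).toMonoidHom H = H) : a ∈ Subgroup.normalizer (H : Set P) := by
  rw [Subgroup.mem_normalizer_iff]
  intro x
  constructor
  · intro hx
    rw [← h]
    exact ⟨x, hx, rfl⟩
  · intro hx
    rw [← h] at hx
    obtain ⟨y, hy, hxy⟩ := hx
    have : y = x := by
      have : a * y * a⁻¹ = a * x * a⁻¹ := hxy
      exact mul_left_cancel (mul_right_cancel this)
    rwa [← this]

private lemma map_conj_eq_of_mem_norm {P : Type*} [Group P] (a : P) (H : Subgroup P)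
    (h : a ∈ Subgroup.normalizer (H : Set P)) : Subgroup.map (MulAut.conj a).toMonoidHom H = H := by
  ext x
  rw [Subgroup.mem_normalizer_iff] at h
  constructor
  · rintro ⟨y, hy, rfl⟩
    exact (h y).mp hy
  · intro hx
    refine ⟨a⁻¹ * x * a, ?_, by simp [mul_assoc]⟩
    have := (h (a⁻¹ * x * a)).mpr
    simp only [mul_assoc] at this ⊢
    apply this
    simpa [mul_assoc] using hx

/-- Let `G` be any group, `f : G →* Aut(G)`, `g` a bijection of `G`
with `g(1) = 1` and `g(στ) = g(σ)·f(σ)(g(τ))`, and set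
`N = {ρ(g(σ))∘f(σ) : σ ∈ G}`. With `ι` the inversion map and `g₀ = ι∘g`, one has
`N = g₀ λ(G) g₀⁻¹` as subgroups of `Perm(G)`. Consequently, if `π ∈ Perm(G)`
satisfies `N = πλ(G)π⁻¹` and the normalizer of `N` in `Perm(G)` equals `Hol(G)`,
then `π⁻¹∘g₀ ∈ Hol(G)`; in particular, if `f` is trivial then `π⁻¹∘ι ∈ Hol(G)`,
and if `h(σ) = conj(g(σ))∘f(σ)` is trivial then `π ∈ Hol(G)`. -/
theorem N_eq_conj_lambda_by_g0
    (G : Type*) [Group G]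
    (f : G →* MulAut G) (g : Equiv.Perm G) (hg1 : g 1 = 1)
    (hrel : ∀ σ τ : G, g (σ * τ) = g σ * (f σ) (g τ)) :
    -- `N = g₀ λ(G) g₀⁻¹`, where `g₀ = ι ∘ g`:
    ({q | ∃ σ : G, q = rho G (g σ) * MulAut.toPerm G (f σ)} : Set (Equiv.Perm G))
        = (fun x => ((Equiv.inv G : Equiv.Perm G) * g) * x
            * ((Equiv.inv G : Equiv.Perm G) * g)⁻¹) '' ((lambda G).range : Set (Equiv.Perm G)) ∧
      -- consequently, for `π` with `N = πλ(G)π⁻¹` and `Norm(N) = Hol(G)`: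
      ∀ π : Equiv.Perm G,
        (Subgroup.map (MulAut.conj π).toMonoidHom (lambda G).range : Set (Equiv.Perm G))
          = {q | ∃ σ : G, q = rho G (g σ) * MulAut.toPerm G (f σ)} →
        Subgroup.normalizer (Subgroup.map (MulAut.conj π).toMonoidHom (lambda G).range : Set (Equiv.Perm G)) = Hol G →
        (π⁻¹ * ((Equiv.inv G : Equiv.Perm G) * g) ∈ Hol G ∧
          (f = 1 → π⁻¹ * (Equiv.inv G : Equiv.Perm G) ∈ Hol G) ∧
          ((∀ σ : G, MulAut.conj (g σ) * f σ = 1) → π ∈ Hol G)) := by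
  set c : Equiv.Perm G := (Equiv.inv G : Equiv.Perm G) * g with hc
  have key : ∀ σ : G, c * lambda G σ * c⁻¹ = rho G (g σ) * MulAut.toPerm G (f σ) := by
    intro σ
    ext x
    have h1 : g (σ * g.symm x⁻¹) = g σ * f σ x⁻¹ := by rw [hrel]; simp
    have h2 : ((Equiv.inv G : Equiv.Perm G))⁻¹ x = x⁻¹ := rfl
    simp [c, lambda, rho, Equiv.Perm.mul_apply, h2, h1, mul_inv_rev,
      show ∀ a : MulAut G, ∀ y, MulAut.toPerm G a y = a y from fun _ _ => rfl]
  have hset : ({q | ∃ σ : G, q = rho G (g σ) * MulAut.toPerm G (f σ)} : Set (Equiv.Perm G))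
      = (fun x => c * x * c⁻¹) '' ((lambda G).range : Set (Equiv.Perm G)) := by
    ext q
    simp only [Set.mem_setOf_eq, Set.mem_image, SetLike.mem_coe, MonoidHom.mem_range]
    constructor
    · rintro ⟨σ, rfl⟩
      exact ⟨lambda G σ, ⟨σ, rfl⟩, key σ⟩
    · rintro ⟨x, ⟨σ, rfl⟩, rfl⟩
      exact ⟨σ, key σ⟩
  refine ⟨hset, ?_⟩
  intro π hN _hnorm
  -- N as a subgroup: map of conjugation by c
  have hmapc : (Subgroup.map (MulAut.conj c).toMonoidHom (lambda G).range : Set (Equiv.Perm G))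
      = (fun x => c * x * c⁻¹) '' ((lambda G).range : Set (Equiv.Perm G)) := by
    ext q
    simp [Subgroup.mem_map, MulAut.conj, Set.mem_image]
  have hsubgrp : Subgroup.map (MulAut.conj π).toMonoidHom (lambda G).range
      = Subgroup.map (MulAut.conj c).toMonoidHom (lambda G).range := by
    apply SetLike.ext'
    rw [hN, hset, hmapc]
  -- conj by π⁻¹ * c fixes lambda range
  have hmain : π⁻¹ * c ∈ Hol G := by
    rw [Hol, Subgroup.mem_normalizer_iff]
    intro x
    constructor
    · intro hx
      have h1 : c * x * c⁻¹ ∈ Subgroup.map (MulAut.conj π).toMonoidHom (lambda G).range := by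
        rw [hsubgrp]
        exact ⟨x, hx, rfl⟩
      obtain ⟨z, hz, hzz⟩ := h1
      have h2 : π * z * π⁻¹ = c * x * c⁻¹ := hzz
      have h4 : z = π⁻¹ * (c * x * c⁻¹) * π := by rw [← h2]; group
      have h3 : π⁻¹ * c * x * (π⁻¹ * c)⁻¹ = z := by rw [h4]; group
      rwa [h3]
    · intro hx
      have h1 : c * x * c⁻¹ ∈ Subgroup.map (MulAut.conj c).toMonoidHom (lambda G).range := by
        rw [← hsubgrp]
        refine ⟨π⁻¹ * c * x * (π⁻¹ * c)⁻¹, hx, ?_⟩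
        show π * (π⁻¹ * c * x * (π⁻¹ * c)⁻¹) * π⁻¹ = c * x * c⁻¹
        group
      obtain ⟨w, hw, hww⟩ := h1
      have h2 : c * w * c⁻¹ = c * x * c⁻¹ := hww
      have : w = x := mul_left_cancel (mul_right_cancel h2)
      rwa [← this]
  refine ⟨hmain, ?_, ?_⟩
  · -- f trivial case
    intro hf
    have hgm : ∀ σ τ : G, g (σ * τ) = g σ * g τ := by
      intro σ τ; rw [hrel]; rw [hf]; rfl
    have hgHol : g ∈ Hol G := by
      rw [Hol, Subgroup.mem_normalizer_iff]
      intro x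
      simp only [MonoidHom.mem_range]
      constructor
      · rintro ⟨σ, rfl⟩
        refine ⟨g σ, ?_⟩
        ext y
        simp [lambda, Equiv.Perm.mul_apply, hgm σ (g.symm y)]
      · rintro ⟨σ, hσ⟩
        refine ⟨g⁻¹ σ, ?_⟩
        have : lambda G (g⁻¹ σ) = g⁻¹ * lambda G σ * g := by
          ext y
          have : g (g⁻¹ σ * y) = σ * g y := by rw [hgm]; simp
          apply g.injective
          simpa [lambda, Equiv.Perm.mul_apply] using this
        rw [this, hσ]
        group
    have : π⁻¹ * (Equiv.inv G : Equiv.Perm G) = (π⁻¹ * c) * g⁻¹ := by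
      rw [hc]; group
    rw [this]
    exact mul_mem hmain (inv_mem hgHol)
  · -- h trivial case
    intro hh
    have hfc : ∀ σ : G, f σ = (MulAut.conj (g σ))⁻¹ := by
      intro σ
      have := hh σ
      rw [← eq_inv_iff_mul_eq_one] at this
      exact this.symm ▸ rfl
    have keyc : ∀ σ : G, c * lambda G σ * c⁻¹ = lambda G (g σ)⁻¹ := by
      intro σ
      rw [key σ, hfc σ]
      ext x
      simp [lambda, rho, Equiv.Perm.mul_apply, mul_assoc,
        show ∀ a : MulAut G, ∀ y, MulAut.toPerm G a y = a y from fun _ _ => rfl,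
        show ∀ a : MulAut G, ∀ y, (MulAut.toPerm G a).symm y = a.symm y from fun _ _ => rfl,
        show ((MulAut.conj (g σ))⁻¹ : MulAut G) x = (g σ)⁻¹ * x * g σ from rfl]
    have hcHol : c ∈ Hol G := by
      rw [Hol, Subgroup.mem_normalizer_iff]
      intro x
      simp only [MonoidHom.mem_range]
      constructor
      · rintro ⟨σ, rfl⟩
        exact ⟨(g σ)⁻¹, (keyc σ).symm⟩
      · rintro ⟨σ, hσ⟩
        refine ⟨g⁻¹ σ⁻¹, ?_⟩
        have h4 := keyc (g⁻¹ σ⁻¹)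
        simp only [show g (g⁻¹ σ⁻¹) = σ⁻¹ from g.apply_symm_apply _, inv_inv] at h4
        have : c * lambda G (g⁻¹ σ⁻¹) * c⁻¹ = lambda G σ := by
          rw [h4]
        rw [← this] at hσ
        exact mul_left_cancel (mul_right_cancel hσ)
    have hπ : π = c * (π⁻¹ * c)⁻¹ := by group
    rw [hπ]
    exact mul_mem hcHol (inv_mem hmain)
end
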